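/- Let X be a finite graph with vertex set Ω, π a correct partition of X, m a matching of WL(X)_π that is pendant or twin with respect to X, and Δ = Ω_-(m). Then WL(X)_π ∖ Δ is separable if and only if WL(X)_π is separable. -/

import Mathlib

open Set

universe u v

variable {Ω : Type*}

/-- The diagonal relation `1_Δ` of a set `Δ ⊆ Ω`. -/
def diagRel (Δ : Set Ω) : Set (Ω × Ω) := {p | p.1 = p.2 ∧ p.1 ∈ Δ}

/-- The number of points `γ` with `(p.1, γ) ∈ r` and `(γ, p.2) ∈ s`. -/
noncomputable def interNum (r s : Set (Ω × Ω)) (p : Ω × Ω) : ℕ :=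
  {γ : Ω | (p.1, γ) ∈ r ∧ (γ, p.2) ∈ s}.ncard

/-- A coherent configuration on `Ω`: a partition `S` of `Ω × Ω` such that the diagonal
is a union of classes, `S` is closed under transposition, and the intersection numbers
are well defined. -/
structure CoherentConfiguration (Ω : Type u) where
  S : Set (Set (Ω × Ω))
  isPartition : Setoid.IsPartition S
  diag_isRelation : ∃ T ⊆ S, ⋃₀ T = diagRel (Set.univ : Set Ω)
  swap_mem : ∀ s ∈ S, {p : Ω × Ω | (p.2, p.1) ∈ s} ∈ S
  coherent : ∀ r ∈ S, ∀ s ∈ S, ∀ t ∈ S, ∀ p ∈ t, ∀ q ∈ t,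
    interNum r s p = interNum r s q

namespace CoherentConfiguration

/-- A relation of `X` is a union of basis relations of `X`. -/
def IsRelation (X : CoherentConfiguration Ω) (r : Set (Ω × Ω)) : Prop :=
  ∃ T ⊆ X.S, ⋃₀ T = r

/-- A fiber of `X` is a set `Δ` with `1_Δ` a basis relation. -/
def IsFiber (X : CoherentConfiguration Ω) (Δ : Set Ω) : Prop :=
  diagRel Δ ∈ X.S

end CoherentConfiguration

/-- `X ≤ Y` iff every relation of `X` is a relation of `Y`. -/
def CCle (X Y : CoherentConfiguration Ω) : Prop :=
  ∀ r, X.IsRelation r → Y.IsRelation r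

/-- The arc set of a graph, as a set of ordered pairs. -/
def adjRel (G : SimpleGraph Ω) : Set (Ω × Ω) := {p | G.Adj p.1 p.2}

/-- `X = WL(G)`: the smallest coherent configuration having the arc set of `G`
among its relations. -/
def IsWL (G : SimpleGraph Ω) (X : CoherentConfiguration Ω) : Prop :=
  X.IsRelation (adjRel G) ∧
    ∀ Y : CoherentConfiguration Ω, Y.IsRelation (adjRel G) → CCle X Y

/-- `X = WL(G)_π`: the smallest coherent configuration having the arc set of `G`
and every `1_Δ`, `Δ ∈ π`, among its relations. -/
def IsWLPart (G : SimpleGraph Ω) (π : Set (Set Ω)) (X : CoherentConfiguration Ω) : Prop :=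
  X.IsRelation (adjRel G) ∧ (∀ Δ ∈ π, X.IsRelation (diagRel Δ)) ∧
    ∀ Y : CoherentConfiguration Ω, Y.IsRelation (adjRel G) →
      (∀ Δ ∈ π, Y.IsRelation (diagRel Δ)) → CCle X Y

/-- A graph is distance-hereditary if in every connected induced subgraph the distance
function is the same as in the graph itself. -/
def DistanceHereditary {V : Type*} (G : SimpleGraph V) : Prop :=
  ∀ s : Set V, (G.induce s).Connected →
    ∀ u v : s, (G.induce s).dist u v = G.dist u.1 v.1

/-- Two vertices are twins in a graph if every other vertex is adjacent to both
or to neither. -/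
def IsTwin (G : SimpleGraph Ω) (a b : Ω) : Prop :=
  ∀ γ, γ ≠ a → γ ≠ b → (G.Adj γ a ↔ G.Adj γ b)

/-- Two points are `X`-twins if for every other point `γ`, the basis relation containing
`(γ, a)` coincides with the one containing `(γ, b)`. -/
def XTwin (X : CoherentConfiguration Ω) (a b : Ω) : Prop :=
  ∀ γ, γ ≠ a → γ ≠ b → ∀ s ∈ X.S, ((γ, a) ∈ s ↔ (γ, b) ∈ s)

/-- The relation `e_X` of being `X`-twins, as a set of pairs. -/
def twinRel (X : CoherentConfiguration Ω) : Set (Ω × Ω) := {p | XTwin X p.1 p.2}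

/-- An equivalence relation on `Ω`, given as a set of pairs. -/
def IsEquivSet (e : Set (Ω × Ω)) : Prop :=
  (∀ a, (a, a) ∈ e) ∧ (∀ a b, (a, b) ∈ e → (b, a) ∈ e) ∧
    (∀ a b c, (a, b) ∈ e → (b, c) ∈ e → (a, c) ∈ e)

/-- A parabolic of `X` is an equivalence relation which is a relation of `X`. -/
def IsParabolic (X : CoherentConfiguration Ω) (e : Set (Ω × Ω)) : Prop :=
  IsEquivSet e ∧ X.IsRelation e

/-- The dot product (composition) of two relations. -/
def relComp (r s : Set (Ω × Ω)) : Set (Ω × Ω) :=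
  {p | ∃ c, (p.1, c) ∈ r ∧ (c, p.2) ∈ s}

/-- An algebraic isomorphism between coherent configurations: a bijection between the
sets of basis relations preserving the intersection numbers. -/
structure AlgIso {Ω : Type u} {Ω' : Type v} (X : CoherentConfiguration Ω)
    (X' : CoherentConfiguration Ω') where
  toFun : Set (Ω × Ω) → Set (Ω' × Ω')
  bijOn : Set.BijOn toFun X.S X'.S
  card_eq : ∀ r ∈ X.S, ∀ s ∈ X.S, ∀ t ∈ X.S, ∀ p ∈ t, ∀ p' ∈ toFun t,
      interNum r s p = interNum (toFun r) (toFun s) p'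

/-- `X` is separable: every algebraic isomorphism from `X` to another coherent
configuration is induced by a bijection of the point sets. -/
def CCSeparable {Ω : Type u} (X : CoherentConfiguration Ω) : Prop :=
  ∀ (Ω' : Type u), Finite Ω' → ∀ (X' : CoherentConfiguration Ω') (φ : AlgIso X X'),
    ∃ f : Ω → Ω', Function.Bijective f ∧ ∀ s ∈ X.S, φ.toFun s = Prod.map f f '' s

/-- `Ω₋(m)`. -/
def OmegaMinus (m : Set (Ω × Ω)) : Set Ω := {a | ∃ b, (a, b) ∈ m}

/-- `Ω₊(m)`. -/
def OmegaPlus (m : Set (Ω × Ω)) : Set Ω := {b | ∃ a, (a, b) ∈ m}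

/-- A matching of `X`: an irreflexive basis relation of valency one in both directions. -/
def IsMatchingCC (X : CoherentConfiguration Ω) (m : Set (Ω × Ω)) : Prop :=
  m ∈ X.S ∧ (∀ p ∈ m, p.1 ≠ p.2) ∧
    (∀ a b c, (a, b) ∈ m → (a, c) ∈ m → b = c) ∧
    (∀ a b c, (a, c) ∈ m → (b, c) ∈ m → a = b)

/-- A pendant matching of `X` with respect to the graph `G`. -/
def IsPendantMatching (G : SimpleGraph Ω) (X : CoherentConfiguration Ω)
    (m : Set (Ω × Ω)) : Prop :=
  IsMatchingCC X m ∧ OmegaMinus m ≠ OmegaPlus m ∧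
    ∀ p ∈ m, G.Adj p.1 p.2 ∧ ∀ c, G.Adj p.1 c → c = p.2

/-- A twin matching of `X` with respect to the graph `G`. -/
def IsTwinMatching (G : SimpleGraph Ω) (X : CoherentConfiguration Ω)
    (m : Set (Ω × Ω)) : Prop :=
  IsMatchingCC X m ∧ OmegaMinus m ≠ OmegaPlus m ∧ ∀ p ∈ m, IsTwin G p.1 p.2

/-- The quotient graph of `G` modulo a (twin) equivalence relation `r`: two distinct
classes are adjacent iff every vertex of one is adjacent to every vertex of the other. -/
def quotGraph (G : SimpleGraph Ω) (r : Ω → Ω → Prop) : SimpleGraph (Quot r) where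
  Adj c d := c ≠ d ∧ ∀ a b : Ω, Quot.mk r a = c → Quot.mk r b = d → G.Adj a b
  symm := ⟨fun _ _ h => ⟨h.1.symm, fun a b ha hb => (h.2 b a hb ha).symm⟩⟩
  loopless := ⟨fun _ h => h.1 rfl⟩

/-- The restriction of a relation on `Ω` to the complement of `Δ`. -/
def restrictRel (Δ : Set Ω) (s : Set (Ω × Ω)) : Set (↥(Δᶜ) × ↥(Δᶜ)) :=
  {p | ((p.1 : Ω), (p.2 : Ω)) ∈ s}

/-- The restriction of a subset of `Ω` to the complement of `Δ`. -/
def restrictSet (Δ Γ : Set Ω) : Set ↥(Δᶜ) := {x | (x : Ω) ∈ Γ}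

set_option linter.unusedSectionVars false

namespace CCAux

lemma mem_diag_univ {A : Type*} {p : A × A} :
    p ∈ diagRel (Set.univ : Set A) ↔ p.1 = p.2 := by
  simp [diagRel]

section Basic

variable {A : Type u} [Finite A] (Z : CoherentConfiguration A)

lemma class_nonempty {s : Set (A × A)} (hs : s ∈ Z.S) : s.Nonempty := by
  rcases Set.eq_empty_or_nonempty s with h | h
  · exact absurd (h ▸ hs) Z.isPartition.1
  · exact h

lemma class_eq {s t : Set (A × A)} {p : A × A} (hs : s ∈ Z.S) (ht : t ∈ Z.S)
    (hps : p ∈ s) (hpt : p ∈ t) : s = t :=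
  ((Z.isPartition.2 p).unique ⟨hs, hps⟩ ⟨ht, hpt⟩)

/-- The basis relation containing a given pair. -/
noncomputable def classOf (p : A × A) : Set (A × A) :=
  ((Z.isPartition.2 p).exists).choose

lemma classOf_mem (p : A × A) : classOf Z p ∈ Z.S :=
  ((Z.isPartition.2 p).exists).choose_spec.1

lemma mem_classOf (p : A × A) : p ∈ classOf Z p :=
  ((Z.isPartition.2 p).exists).choose_spec.2

lemma classOf_eq {s : Set (A × A)} {p : A × A} (hs : s ∈ Z.S) (hp : p ∈ s) :
    classOf Z p = s :=
  class_eq Z (classOf_mem Z p) hs (mem_classOf Z p) hp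

lemma interNum_pos {r s : Set (A × A)} {p : A × A} :
    0 < interNum r s p ↔ ∃ γ, (p.1, γ) ∈ r ∧ (γ, p.2) ∈ s := by
  rw [interNum, Set.ncard_pos (Set.toFinite _)]
  exact ⟨fun ⟨γ, hγ⟩ => ⟨γ, hγ⟩, fun ⟨γ, hγ⟩ => ⟨γ, hγ⟩⟩

lemma interNum_const {r s t : Set (A × A)} (hr : r ∈ Z.S) (hs : s ∈ Z.S)
    (ht : t ∈ Z.S) {p q : A × A} (hp : p ∈ t) (hq : q ∈ t) :
    interNum r s p = interNum r s q :=
  Z.coherent r hr s hs t ht p hp q hq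

/-- Classes contained in the diagonal. -/
lemma classOf_diag_subset (a : A) :
    classOf Z (a, a) ⊆ diagRel (Set.univ : Set A) := by
  obtain ⟨T, hTS, hTU⟩ := Z.diag_isRelation
  have h : (a, a) ∈ ⋃₀ T := by rw [hTU]; exact mem_diag_univ.mpr rfl
  obtain ⟨t₀, ht₀T, hmem⟩ := h
  have h2 : classOf Z (a, a) = t₀ := classOf_eq Z (hTS ht₀T) hmem
  rw [h2, ← hTU]
  exact Set.subset_sUnion_of_mem ht₀T

/-- The fiber of a point. -/
def fiberOf (a : A) : Set A := {b | (b, b) ∈ classOf Z (a, a)}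

lemma mem_fiberOf_self (a : A) : a ∈ fiberOf Z a := mem_classOf Z (a, a)

lemma diagRel_fiberOf (a : A) : diagRel (fiberOf Z a) = classOf Z (a, a) := by
  ext ⟨x, y⟩
  constructor
  · rintro ⟨h1, h2⟩
    dsimp at h1
    subst h1; exact h2
  · intro h
    have hx : x = y := (classOf_diag_subset Z a h).1
    subst hx
    exact ⟨rfl, h⟩

lemma fiberOf_class_mem (a : A) : diagRel (fiberOf Z a) ∈ Z.S := by
  rw [diagRel_fiberOf]; exact classOf_mem Z _

lemma fiberOf_eq_of_mem {a b : A} (h : b ∈ fiberOf Z a) : fiberOf Z b = fiberOf Z a := by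
  unfold fiberOf
  rw [classOf_eq Z (classOf_mem Z (a, a)) h]

lemma fiberOf_eq_or_disjoint (a b : A) :
    fiberOf Z a = fiberOf Z b ∨ fiberOf Z a ∩ fiberOf Z b = ∅ := by
  rcases Set.eq_empty_or_nonempty (fiberOf Z a ∩ fiberOf Z b) with h | ⟨c, hca, hcb⟩
  · exact Or.inr h
  · exact Or.inl ((fiberOf_eq_of_mem Z hca).symm.trans (fiberOf_eq_of_mem Z hcb))

end Basic

section Comp

variable {A : Type u} [Finite A] (Z : CoherentConfiguration A)

/-- The swap (transpose) of a relation. -/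
def swapRel (s : Set (A × A)) : Set (A × A) := {p : A × A | (p.2, p.1) ∈ s}

lemma swapRel_mem {s : Set (A × A)} (hs : s ∈ Z.S) : swapRel s ∈ Z.S :=
  Z.swap_mem s hs

lemma mem_swapRel {s : Set (A × A)} {a b : A} : (a, b) ∈ swapRel s ↔ (b, a) ∈ s :=
  Iff.rfl

lemma swapRel_swapRel (s : Set (A × A)) : swapRel (swapRel s) = s := rfl

lemma swapRel_relComp (r s : Set (A × A)) :
    swapRel (relComp r s) = relComp (swapRel s) (swapRel r) := by
  ext ⟨a, b⟩
  constructor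
  · rintro ⟨c, h1, h2⟩; exact ⟨c, h2, h1⟩
  · rintro ⟨c, h1, h2⟩; exact ⟨c, h2, h1⟩

lemma OmegaPlus_swapRel (s : Set (A × A)) : OmegaPlus (swapRel s) = OmegaMinus s := rfl

lemma OmegaMinus_swapRel (s : Set (A × A)) : OmegaMinus (swapRel s) = OmegaPlus s := rfl

lemma swapRel_diagRel (Δ : Set A) : swapRel (diagRel Δ) = diagRel Δ := by
  ext ⟨a, b⟩
  show (b = a ∧ b ∈ Δ) ↔ (a = b ∧ a ∈ Δ)
  constructor
  · rintro ⟨h1, h2⟩; subst h1; exact ⟨rfl, h2⟩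
  · rintro ⟨h1, h2⟩; subst h1; exact ⟨rfl, h2⟩

lemma source_mem_fiber {s : Set (A × A)} (hs : s ∈ Z.S) {a b a' b' : A}
    (h : (a, b) ∈ s) (h' : (a', b') ∈ s) : a' ∈ fiberOf Z a := by
  have he := classOf_mem Z (a, a)
  have hpos : 0 < interNum (classOf Z (a, a)) s (a, b) :=
    interNum_pos.mpr ⟨a, mem_classOf Z _, h⟩
  rw [interNum_const Z he hs hs h h'] at hpos
  obtain ⟨γ, h1, h2⟩ := interNum_pos.mp hpos
  have hγ : a' = γ := (classOf_diag_subset Z a h1).1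
  show (a', a') ∈ classOf Z (a, a)
  rw [hγ]; rw [hγ] at h1; exact h1

lemma target_mem_fiber {s : Set (A × A)} (hs : s ∈ Z.S) {a b a' b' : A}
    (h : (a, b) ∈ s) (h' : (a', b') ∈ s) : b' ∈ fiberOf Z b :=
  source_mem_fiber Z (swapRel_mem Z hs) (mem_swapRel.mpr h) (mem_swapRel.mpr h')

lemma outSet_eq_interNum (s : Set (A × A)) (a : A) :
    interNum s (swapRel s) (a, a) = {γ | (a, γ) ∈ s}.ncard := by
  unfold interNum
  congr 1
  ext γ
  exact ⟨fun h => h.1, fun h => ⟨h, h⟩⟩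

lemma outSet_const {s : Set (A × A)} (hs : s ∈ Z.S) {a a' : A}
    (h' : a' ∈ fiberOf Z a) :
    {γ | (a', γ) ∈ s}.ncard = {γ | (a, γ) ∈ s}.ncard := by
  rw [← outSet_eq_interNum, ← outSet_eq_interNum]
  exact interNum_const Z hs (swapRel_mem Z hs) (classOf_mem Z (a, a)) h' (mem_classOf Z _)

lemma OmegaMinus_eq_fiber {s : Set (A × A)} (hs : s ∈ Z.S) {a b : A}
    (h : (a, b) ∈ s) : OmegaMinus s = fiberOf Z a := by
  ext a'
  constructor
  · rintro ⟨b', hb'⟩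
    exact source_mem_fiber Z hs h hb'
  · intro ha'
    have hcard : {γ | (a', γ) ∈ s}.ncard = {γ | (a, γ) ∈ s}.ncard := outSet_const Z hs ha'
    have hpos : 0 < {γ | (a, γ) ∈ s}.ncard :=
      (Set.ncard_pos (Set.toFinite _)).mpr ⟨b, h⟩
    rw [← hcard] at hpos
    obtain ⟨γ, hγ⟩ := (Set.ncard_pos (Set.toFinite _)).mp hpos
    exact ⟨γ, hγ⟩

lemma OmegaPlus_eq_fiber {s : Set (A × A)} (hs : s ∈ Z.S) {a b : A}
    (h : (a, b) ∈ s) : OmegaPlus s = fiberOf Z b :=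
  OmegaMinus_eq_fiber Z (swapRel_mem Z hs) (mem_swapRel.mpr h)

lemma mem_relComp_iff {r s : Set (A × A)} {p : A × A} :
    p ∈ relComp r s ↔ 0 < interNum r s p := by
  rw [interNum_pos]
  exact ⟨fun ⟨c, h⟩ => ⟨c, h⟩, fun ⟨c, h⟩ => ⟨c, h⟩⟩

lemma class_subset_relComp {r s t : Set (A × A)} (hr : r ∈ Z.S) (hs : s ∈ Z.S)
    (ht : t ∈ Z.S) {p : A × A} (hp : p ∈ t) (hmem : p ∈ relComp r s) :
    t ⊆ relComp r s := by
  intro q hq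
  rw [mem_relComp_iff] at hmem ⊢
  rw [interNum_const Z hr hs ht hq hp]
  exact hmem

/-- Composition with a "thin" relation (both-ways functional) on the left is a
basis relation. -/
lemma relComp_thin_mem {μ s : Set (A × A)} (hμ : μ ∈ Z.S)
    (hfun : ∀ a b c, (a, b) ∈ μ → (a, c) ∈ μ → b = c)
    (hinj : ∀ a b c, (a, c) ∈ μ → (b, c) ∈ μ → a = b)
    (hs : s ∈ Z.S) (hsrc : ∀ p ∈ s, p.1 ∈ OmegaPlus μ) :
    relComp μ s ∈ Z.S := by
  obtain ⟨⟨γ₀, θ₀⟩, hγθ⟩ := class_nonempty Z hs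
  obtain ⟨δ₀, hδ₀⟩ := hsrc _ hγθ
  have hne : (δ₀, θ₀) ∈ relComp μ s := ⟨γ₀, hδ₀, hγθ⟩
  set t := classOf Z (δ₀, θ₀) with htdef
  have htS : t ∈ Z.S := classOf_mem Z _
  have htsub : t ⊆ relComp μ s :=
    class_subset_relComp Z hμ hs htS (mem_classOf Z _) hne
  -- swapμ ∘ t ⊆ s
  have hsub1 : relComp (swapRel μ) t ⊆ s := by
    rintro ⟨γ', θ'⟩ ⟨δ', hδ'μ, hδ't⟩
    obtain ⟨γ₂, hγ₂μ, hγ₂s⟩ := htsub hδ't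
    have : γ₂ = γ' := hfun _ _ _ hγ₂μ hδ'μ
    rw [← this]; exact hγ₂s
  -- s ⊆ swapμ ∘ t
  have hsub2 : s ⊆ relComp (swapRel μ) t := by
    obtain ⟨γ₃, hγ₃μ, hγ₃s⟩ := htsub (mem_classOf Z (δ₀, θ₀))
    exact class_subset_relComp Z (swapRel_mem Z hμ) htS hs hγ₃s ⟨δ₀, hγ₃μ, mem_classOf Z _⟩
  -- relComp μ s ⊆ t
  have hsub3 : relComp μ s ⊆ t := by
    rintro ⟨δ₁, θ₁⟩ ⟨γ₁, hγ₁μ, hγ₁s⟩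
    obtain ⟨δ₂, hδ₂μ, hδ₂t⟩ := hsub2 hγ₁s
    have : δ₂ = δ₁ := hinj _ _ _ hδ₂μ hγ₁μ
    rw [← this]; exact hδ₂t
  have : relComp μ s = t := le_antisymm hsub3 htsub
  rw [this]; exact htS

/-- Left-cancellation of a thin relation. -/
lemma swap_relComp_cancel {μ s : Set (A × A)}
    (hfun : ∀ a b c, (a, b) ∈ μ → (a, c) ∈ μ → b = c)
    (hsrc : ∀ p ∈ s, p.1 ∈ OmegaPlus μ) :
    relComp (swapRel μ) (relComp μ s) = s := by
  ext ⟨γ, θ⟩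
  constructor
  · rintro ⟨δ, hδμ, γ₂, hγ₂μ, hγ₂s⟩
    have : γ₂ = γ := hfun _ _ _ hγ₂μ hδμ
    rw [← this]; exact hγ₂s
  · intro h
    obtain ⟨δ, hδ⟩ := hsrc _ h
    exact ⟨δ, hδ, γ, hδ, h⟩

/-- Thin expansion: `μ ∘ (μ* ∘ s) = s` for `s` with sources in `Ω₋(μ)`. -/
lemma relComp_swap_cancel {μ s : Set (A × A)}
    (hinj : ∀ a b c, (a, c) ∈ μ → (b, c) ∈ μ → a = b)
    (hsrc : ∀ p ∈ s, p.1 ∈ OmegaMinus μ) :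
    relComp μ (relComp (swapRel μ) s) = s := by
  have := swap_relComp_cancel (μ := swapRel μ) (s := s)
    (fun a b c h1 h2 => hinj _ _ _ h1 h2)
    (by rw [OmegaPlus_swapRel]; exact hsrc)
  rw [swapRel_swapRel] at this
  exact this

end Comp

section Iso

variable {A : Type u} {B : Type v} [Finite A] [Finite B]
variable {Z : CoherentConfiguration A} {Z' : CoherentConfiguration B}
variable (φ : AlgIso Z Z')

lemma iso_mapsTo {s : Set (A × A)} (hs : s ∈ Z.S) : φ.toFun s ∈ Z'.S :=
  φ.bijOn.1 hs

lemma iso_inj {s t : Set (A × A)} (hs : s ∈ Z.S) (ht : t ∈ Z.S)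
    (h : φ.toFun s = φ.toFun t) : s = t :=
  φ.bijOn.2.1 hs ht h

lemma iso_surj {s' : Set (B × B)} (hs' : s' ∈ Z'.S) :
    ∃ s ∈ Z.S, φ.toFun s = s' := by
  obtain ⟨s, hs, hfs⟩ := φ.bijOn.2.2 hs'
  exact ⟨s, hs, hfs⟩

lemma iso_pos {r s t : Set (A × A)} (hr : r ∈ Z.S) (hs : s ∈ Z.S) (ht : t ∈ Z.S) :
    (∃ p ∈ t, 0 < interNum r s p) ↔
      (∃ p' ∈ φ.toFun t, 0 < interNum (φ.toFun r) (φ.toFun s) p') := by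
  constructor
  · rintro ⟨p, hp, hpos⟩
    obtain ⟨p', hp'⟩ := class_nonempty Z' (iso_mapsTo φ ht)
    refine ⟨p', hp', ?_⟩
    rw [← φ.card_eq r hr s hs t ht p hp p' hp']
    exact hpos
  · rintro ⟨p', hp', hpos⟩
    obtain ⟨p, hp⟩ := class_nonempty Z ht
    refine ⟨p, hp, ?_⟩
    rw [φ.card_eq r hr s hs t ht p hp p' hp']
    exact hpos

lemma diag_class_iff {C : Type*} [Finite C] (W : CoherentConfiguration C)
    {e : Set (C × C)} (he : e ∈ W.S) :
    e ⊆ diagRel (Set.univ : Set C) ↔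
      ((∃ s ∈ W.S, ∃ p ∈ s, 0 < interNum s e p) ∧
       ∀ s ∈ W.S, ∀ t ∈ W.S, (∃ p ∈ t, 0 < interNum s e p) → t = s) := by
  constructor
  · intro hd
    constructor
    · obtain ⟨⟨b, c⟩, hbc⟩ := class_nonempty W he
      have hb : b = c := (hd hbc).1
      subst hb
      exact ⟨e, he, (b, b), hbc, interNum_pos.mpr ⟨b, hbc, hbc⟩⟩
    · rintro s hs t ht ⟨p, hp, hpos⟩
      obtain ⟨γ, h1, h2⟩ := interNum_pos.mp hpos
      have : γ = p.2 := (hd h2).1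
      subst this
      exact class_eq W ht hs hp h1
  · rintro ⟨_, huniq⟩
    obtain ⟨⟨b, c⟩, hbc⟩ := class_nonempty W he
    have hd : classOf W (b, b) ∈ W.S := classOf_mem W _
    have hpos : 0 < interNum (classOf W (b, b)) e (b, c) :=
      interNum_pos.mpr ⟨b, mem_classOf W _, hbc⟩
    have : e = classOf W (b, b) := huniq _ hd e he ⟨(b, c), hbc, hpos⟩
    rw [this]
    exact classOf_diag_subset W b

lemma iso_diag {e : Set (A × A)} (he : e ∈ Z.S)
    (hd : e ⊆ diagRel (Set.univ : Set A)) :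
    φ.toFun e ⊆ diagRel (Set.univ : Set B) := by
  rw [diag_class_iff Z he] at hd
  rw [diag_class_iff Z' (iso_mapsTo φ he)]
  constructor
  · obtain ⟨s, hs, hex⟩ := hd.1
    exact ⟨φ.toFun s, iso_mapsTo φ hs, (iso_pos φ hs he hs).mp hex⟩
  · rintro s' hs' t' ht' hex'
    obtain ⟨s, hs, rfl⟩ := iso_surj φ hs'
    obtain ⟨t, ht, rfl⟩ := iso_surj φ ht'
    have : t = s := hd.2 s hs t ht ((iso_pos φ hs he ht).mpr hex')
    rw [this]

lemma diag_class_shape {C : Type*} {e : Set (C × C)}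
    (hd : e ⊆ diagRel (Set.univ : Set C)) : e = diagRel {a | (a, a) ∈ e} := by
  ext ⟨x, y⟩
  constructor
  · intro h
    have : x = y := (hd h).1
    subst this
    exact ⟨rfl, h⟩
  · rintro ⟨h1, h2⟩
    dsimp at h1
    subst h1
    exact h2

lemma iso_swapRel {s : Set (A × A)} (hs : s ∈ Z.S) :
    φ.toFun (swapRel s) = swapRel (φ.toFun s) := by
  obtain ⟨⟨a, b⟩, hab⟩ := class_nonempty Z hs
  have he : classOf Z (a, a) ∈ Z.S := classOf_mem Z _
  have hd : classOf Z (a, a) ⊆ diagRel Set.univ := classOf_diag_subset Z a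
  have hpos : ∃ p ∈ classOf Z (a, a), 0 < interNum s (swapRel s) p :=
    ⟨(a, a), mem_classOf Z _, interNum_pos.mpr ⟨b, hab, hab⟩⟩
  have hpos' := (iso_pos φ hs (swapRel_mem Z hs) he).mp hpos
  obtain ⟨p', hp', hpos''⟩ := hpos'
  have hp'd : p'.1 = p'.2 := (iso_diag φ he hd hp').1
  obtain ⟨γ, h1, h2⟩ := interNum_pos.mp hpos''
  have h3 : (γ, p'.1) ∈ swapRel (φ.toFun s) := by
    rw [mem_swapRel]; exact h1
  rw [← hp'd] at h2
  exact class_eq Z' (iso_mapsTo φ (swapRel_mem Z hs))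
    (swapRel_mem Z' (iso_mapsTo φ hs)) h2 h3

lemma srcIn_iff {C : Type*} [Finite C] (W : CoherentConfiguration C)
    {e s : Set (C × C)} (he : e ∈ W.S) (hd : e ⊆ diagRel Set.univ)
    (hs : s ∈ W.S) :
    (∃ p ∈ s, 0 < interNum e s p) ↔ ∀ p ∈ s, (p.1, p.1) ∈ e := by
  constructor
  · rintro ⟨p₀, hp₀, hpos⟩ p hp
    have := interNum_const W he hs hs hp₀ hp ▸ hpos
    obtain ⟨γ, h1, h2⟩ := interNum_pos.mp this
    have hx : p.1 = γ := (hd h1).1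
    rwa [← hx] at h1
  · intro h
    obtain ⟨p, hp⟩ := class_nonempty W hs
    exact ⟨p, hp, interNum_pos.mpr ⟨p.1, h p hp, hp⟩⟩

lemma tgtIn_iff {C : Type*} [Finite C] (W : CoherentConfiguration C)
    {e s : Set (C × C)} (he : e ∈ W.S) (hd : e ⊆ diagRel Set.univ)
    (hs : s ∈ W.S) :
    (∃ p ∈ s, 0 < interNum s e p) ↔ ∀ p ∈ s, (p.2, p.2) ∈ e := by
  constructor
  · rintro ⟨p₀, hp₀, hpos⟩ p hp
    have := interNum_const W hs he hs hp₀ hp ▸ hpos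
    obtain ⟨γ, h1, h2⟩ := interNum_pos.mp this
    have hx : γ = p.2 := (hd h2).1
    rwa [hx] at h2
  · intro h
    obtain ⟨p, hp⟩ := class_nonempty W hs
    exact ⟨p, hp, interNum_pos.mpr ⟨p.2, hp, h p hp⟩⟩

lemma iso_srcIn {e s : Set (A × A)} (he : e ∈ Z.S) (hd : e ⊆ diagRel Set.univ)
    (hs : s ∈ Z.S) (h : ∀ p ∈ s, (p.1, p.1) ∈ e) :
    ∀ p' ∈ φ.toFun s, (p'.1, p'.1) ∈ φ.toFun e := by
  rw [← srcIn_iff Z' (iso_mapsTo φ he) (iso_diag φ he hd) (iso_mapsTo φ hs)]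
  exact (iso_pos φ he hs hs).mp ((srcIn_iff Z he hd hs).mpr h)

lemma iso_tgtIn {e s : Set (A × A)} (he : e ∈ Z.S) (hd : e ⊆ diagRel Set.univ)
    (hs : s ∈ Z.S) (h : ∀ p ∈ s, (p.2, p.2) ∈ e) :
    ∀ p' ∈ φ.toFun s, (p'.2, p'.2) ∈ φ.toFun e := by
  rw [← tgtIn_iff Z' (iso_mapsTo φ he) (iso_diag φ he hd) (iso_mapsTo φ hs)]
  exact (iso_pos φ hs he hs).mp ((tgtIn_iff Z he hd hs).mpr h)

end Iso

section MatchIso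

variable {A : Type u} {B : Type v} [Finite A] [Finite B]
variable {Z : CoherentConfiguration A} {Z' : CoherentConfiguration B}
variable (φ : AlgIso Z Z') {μ : Set (A × A)}

lemma mem_minus_diag {p : A × A} (hp : p ∈ μ) :
    (p.1, p.1) ∈ diagRel (OmegaMinus μ) :=
  ⟨rfl, p.2, by simpa using hp⟩

lemma mem_plus_diag {p : A × A} (hp : p ∈ μ) :
    (p.2, p.2) ∈ diagRel (OmegaPlus μ) :=
  ⟨rfl, p.1, by simpa using hp⟩

lemma minus_diag_mem {Z : CoherentConfiguration A} (hμ : μ ∈ Z.S) :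
    diagRel (OmegaMinus μ) ∈ Z.S := by
  obtain ⟨p₀, hp₀⟩ := class_nonempty Z hμ
  have : (p₀.1, p₀.2) ∈ μ := by simpa using hp₀
  rw [OmegaMinus_eq_fiber Z hμ this]
  exact fiberOf_class_mem Z p₀.1

lemma plus_diag_mem {Z : CoherentConfiguration A} (hμ : μ ∈ Z.S) :
    diagRel (OmegaPlus μ) ∈ Z.S := by
  have := minus_diag_mem (μ := swapRel μ) (swapRel_mem Z hμ)
  rwa [OmegaMinus_swapRel] at this

lemma diagRel_subset_univ {C : Type*} (D : Set C) :
    diagRel D ⊆ diagRel (Set.univ : Set C) :=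
  fun _ hp => ⟨hp.1, trivial⟩

lemma diagRel_injective {C : Type*} {D E : Set C} (h : diagRel D = diagRel E) :
    D = E := by
  ext b
  constructor
  · intro hb
    exact ((Set.ext_iff.mp h (b, b)).mp ⟨rfl, hb⟩).2
  · intro hb
    exact ((Set.ext_iff.mp h (b, b)).mpr ⟨rfl, hb⟩).2

lemma iso_minus_diag (hμ : μ ∈ Z.S) :
    φ.toFun (diagRel (OmegaMinus μ)) = diagRel (OmegaMinus (φ.toFun μ)) := by
  have heS : diagRel (OmegaMinus μ) ∈ Z.S := minus_diag_mem hμ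
  have hd : diagRel (OmegaMinus μ) ⊆ diagRel Set.univ := diagRel_subset_univ _
  have he'S := iso_mapsTo φ heS
  have hd' := iso_diag φ heS hd
  have hset : {a | (a, a) ∈ φ.toFun (diagRel (OmegaMinus μ))}
      = OmegaMinus (φ.toFun μ) := by
    ext a
    constructor
    · intro ha
      have hpos : ∃ p ∈ diagRel (OmegaMinus μ), 0 < interNum μ (swapRel μ) p := by
        obtain ⟨p₀, hp₀⟩ := class_nonempty Z hμ
        refine ⟨(p₀.1, p₀.1), mem_minus_diag hp₀, interNum_pos.mpr ⟨p₀.2, ?_, ?_⟩⟩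
        · simpa using hp₀
        · show (p₀.1, p₀.2) ∈ μ; simpa using hp₀
      obtain ⟨p', hp', hpos'⟩ := (iso_pos φ hμ (swapRel_mem Z hμ) heS).mp hpos
      have hval := interNum_const Z' (iso_mapsTo φ hμ)
        (iso_mapsTo φ (swapRel_mem Z hμ)) he'S hp' ha ▸ hpos'
      obtain ⟨γ, h1, _⟩ := interNum_pos.mp hval
      exact ⟨γ, h1⟩
    · rintro ⟨b, hb⟩
      exact iso_srcIn φ heS hd hμ (fun p hp => mem_minus_diag hp) (a, b) hb
  rw [diag_class_shape hd', hset]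

lemma iso_plus_diag (hμ : μ ∈ Z.S) :
    φ.toFun (diagRel (OmegaPlus μ)) = diagRel (OmegaPlus (φ.toFun μ)) := by
  have := iso_minus_diag φ (μ := swapRel μ) (swapRel_mem Z hμ)
  rwa [OmegaMinus_swapRel, iso_swapRel φ hμ, OmegaMinus_swapRel] at this

lemma thin_outdeg_one {Z : CoherentConfiguration A} (hμ : μ ∈ Z.S)
    (hfun : ∀ a b c, (a, b) ∈ μ → (a, c) ∈ μ → b = c)
    {p : A × A} (hp : p ∈ diagRel (OmegaMinus μ)) :
    interNum μ (swapRel μ) p = 1 := by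
  obtain ⟨hp1, b₀, hb₀⟩ := hp
  have hpeq : p = (p.1, p.1) := by
    ext
    · rfl
    · exact hp1.symm
  rw [hpeq, outSet_eq_interNum]
  rw [show {γ | (p.1, γ) ∈ μ} = {b₀} from ?_]
  · exact Set.ncard_singleton b₀
  · ext γ
    simp only [Set.mem_setOf_eq, Set.mem_singleton_iff]
    exact ⟨fun h => hfun _ _ _ h hb₀, fun h => h ▸ hb₀⟩

lemma iso_thin_fun (hμ : μ ∈ Z.S)
    (hfun : ∀ a b c, (a, b) ∈ μ → (a, c) ∈ μ → b = c) :
    ∀ a b c, (a, b) ∈ φ.toFun μ → (a, c) ∈ φ.toFun μ → b = c := by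
  intro a b c hab hac
  have heS : diagRel (OmegaMinus μ) ∈ Z.S := minus_diag_mem hμ
  have haa : (a, a) ∈ φ.toFun (diagRel (OmegaMinus μ)) :=
    iso_srcIn φ heS (diagRel_subset_univ _) hμ (fun p hp => mem_minus_diag hp) (a, b) hab
  obtain ⟨p₀, hp₀⟩ := class_nonempty Z heS
  have h1 : interNum μ (swapRel μ) p₀ = 1 := thin_outdeg_one hμ hfun hp₀
  have h2 : interNum (φ.toFun μ) (φ.toFun (swapRel μ)) (a, a) = 1 := by
    rw [← φ.card_eq μ hμ (swapRel μ) (swapRel_mem Z hμ) _ heS p₀ hp₀ (a, a) haa]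
    exact h1
  rw [iso_swapRel φ hμ, outSet_eq_interNum] at h2
  obtain ⟨x, hx⟩ := Set.ncard_eq_one.mp h2
  have hb : b ∈ {γ | (a, γ) ∈ φ.toFun μ} := hab
  have hc : c ∈ {γ | (a, γ) ∈ φ.toFun μ} := hac
  rw [hx] at hb hc
  rw [Set.mem_singleton_iff] at hb hc
  rw [hb, hc]

lemma iso_thin_inj (hμ : μ ∈ Z.S)
    (hinj : ∀ a b c, (a, c) ∈ μ → (b, c) ∈ μ → a = b) :
    ∀ a b c, (a, c) ∈ φ.toFun μ → (b, c) ∈ φ.toFun μ → a = b := by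
  intro a b c hac hbc
  have := iso_thin_fun φ (μ := swapRel μ) (swapRel_mem Z hμ)
    (fun x y z h1 h2 => hinj _ _ _ h1 h2) c a b
  rw [iso_swapRel φ hμ] at this
  exact this hac hbc

lemma iso_plus_sources (hμ : μ ∈ Z.S) {s : Set (A × A)} (hs : s ∈ Z.S)
    (hsrc : ∀ p ∈ s, p.1 ∈ OmegaPlus μ) :
    ∀ p' ∈ φ.toFun s, p'.1 ∈ OmegaPlus (φ.toFun μ) := by
  intro p' hp'
  have heS : diagRel (OmegaPlus μ) ∈ Z.S := plus_diag_mem hμ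
  have h := iso_srcIn φ heS (diagRel_subset_univ _) hs
    (fun p hp => ⟨rfl, hsrc p hp⟩) p' hp'
  rw [iso_plus_diag φ hμ] at h
  exact h.2

lemma iso_relComp_thin (hμ : μ ∈ Z.S)
    (hfun : ∀ a b c, (a, b) ∈ μ → (a, c) ∈ μ → b = c)
    (hinj : ∀ a b c, (a, c) ∈ μ → (b, c) ∈ μ → a = b)
    {s : Set (A × A)} (hs : s ∈ Z.S) (hsrc : ∀ p ∈ s, p.1 ∈ OmegaPlus μ) :
    φ.toFun (relComp μ s) = relComp (φ.toFun μ) (φ.toFun s) := by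
  have htS : relComp μ s ∈ Z.S := relComp_thin_mem Z hμ hfun hinj hs hsrc
  have hrel'S : relComp (φ.toFun μ) (φ.toFun s) ∈ Z'.S :=
    relComp_thin_mem Z' (iso_mapsTo φ hμ) (iso_thin_fun φ hμ hfun)
      (iso_thin_inj φ hμ hinj) (iso_mapsTo φ hs) (iso_plus_sources φ hμ hs hsrc)
  have hpos : ∃ p ∈ relComp μ s, 0 < interNum μ s p := by
    obtain ⟨p, hp⟩ := class_nonempty Z htS
    exact ⟨p, hp, mem_relComp_iff.mp hp⟩
  obtain ⟨p', hp', hpos'⟩ := (iso_pos φ hμ hs htS).mp hpos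
  exact class_eq Z' (iso_mapsTo φ htS) hrel'S hp' (mem_relComp_iff.mpr hpos')

end MatchIso

section Restrict

variable {A : Type u} [Finite A]

lemma mem_restrictRel {D : Set A} {s : Set (A × A)} {p : ↥(Dᶜ) × ↥(Dᶜ)} :
    p ∈ restrictRel D s ↔ ((p.1 : A), (p.2 : A)) ∈ s := Iff.rfl

lemma fiberOf_eq_of_diag (W : CoherentConfiguration A) {D : Set A}
    (hD : diagRel D ∈ W.S) {d : A} (hd : d ∈ D) : fiberOf W d = D := by
  have hcl : classOf W (d, d) = diagRel D := classOf_eq W hD ⟨rfl, hd⟩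
  ext b
  show (b, b) ∈ classOf W (d, d) ↔ b ∈ D
  rw [hcl]
  exact ⟨fun h => h.2, fun h => ⟨rfl, h⟩⟩

lemma fiber_dichotomy_src (W : CoherentConfiguration A) {D : Set A}
    (hD : diagRel D ∈ W.S) {s : Set (A × A)} (hs : s ∈ W.S) :
    (∀ p ∈ s, p.1 ∈ D) ∨ (∀ p ∈ s, p.1 ∉ D) := by
  by_cases h : ∃ p ∈ s, p.1 ∈ D
  · obtain ⟨p₀, hp₀, hp₀D⟩ := h
    left
    intro p hp
    have h1 : p.1 ∈ fiberOf W p₀.1 := by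
      have := source_mem_fiber W hs (a := p₀.1) (b := p₀.2) (a' := p.1) (b' := p.2)
        (by simpa using hp₀) (by simpa using hp)
      exact this
    rwa [fiberOf_eq_of_diag W hD hp₀D] at h1
  · right
    intro p hp hpD
    exact h ⟨p, hp, hpD⟩

lemma fiber_dichotomy_tgt (W : CoherentConfiguration A) {D : Set A}
    (hD : diagRel D ∈ W.S) {s : Set (A × A)} (hs : s ∈ W.S) :
    (∀ p ∈ s, p.2 ∈ D) ∨ (∀ p ∈ s, p.2 ∉ D) := by
  rcases fiber_dichotomy_src W hD (swapRel_mem W hs) with h | h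
  · left; intro p hp; exact h (p.2, p.1) (mem_swapRel.mpr (by simpa using hp))
  · right; intro p hp; exact h (p.2, p.1) (mem_swapRel.mpr (by simpa using hp))

lemma restrict_interNum_of_avoid {D : Set A} {r s : Set (A × A)}
    (h : ∀ q ∈ r, q.2 ∉ D) (p : ↥(Dᶜ) × ↥(Dᶜ)) :
    interNum (restrictRel D r) (restrictRel D s) p
      = interNum r s ((p.1 : A), (p.2 : A)) := by
  unfold interNum
  rw [show {γ : A | (((p.1 : A), (p.2 : A)).1, γ) ∈ r ∧ (γ, ((p.1 : A), (p.2 : A)).2) ∈ s}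
      = Subtype.val '' {γ : ↥(Dᶜ) | ((p.1 : A), (γ : A)) ∈ r ∧ ((γ : A), (p.2 : A)) ∈ s}
      from ?_]
  · rw [Set.ncard_image_of_injective _ Subtype.val_injective]
    rfl
  · ext γ
    constructor
    · rintro ⟨h1, h2⟩
      have hγ : γ ∉ D := h (↑p.1, γ) h1
      exact ⟨⟨γ, hγ⟩, ⟨h1, h2⟩, rfl⟩
    · rintro ⟨γ', ⟨h1, h2⟩, rfl⟩
      exact ⟨h1, h2⟩

lemma restrict_interNum_of_into {D : Set A} {r s : Set (A × A)}
    (h : ∀ q ∈ r, q.2 ∈ D) (p : ↥(Dᶜ) × ↥(Dᶜ)) :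
    interNum (restrictRel D r) (restrictRel D s) p = 0 := by
  unfold interNum
  rw [show {γ : ↥(Dᶜ) | (p.1, γ) ∈ restrictRel D r ∧ (γ, p.2) ∈ restrictRel D s} = ∅
    from ?_]
  · exact Set.ncard_empty _
  · ext γ
    simp only [Set.mem_empty_iff_false, iff_false, Set.mem_setOf_eq]
    rintro ⟨h1, _⟩
    exact γ.2 (h (↑p.1, ↑γ) h1)

/-- The restriction of a coherent configuration to the complement of a fiber. -/
def restrictCC (W : CoherentConfiguration A) (D : Set A) (hD : diagRel D ∈ W.S) :
    CoherentConfiguration ↥(Dᶜ) where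
  S := {t | t.Nonempty ∧ ∃ s ∈ W.S, t = restrictRel D s}
  isPartition := by
    constructor
    · rintro ⟨⟨p, hp⟩, -⟩
      exact hp
    · intro p
      refine ⟨restrictRel D (classOf W ((p.1 : A), (p.2 : A))), ⟨⟨⟨p, ?_⟩,
        classOf W ((p.1 : A), (p.2 : A)), classOf_mem W _, rfl⟩, ?_⟩, ?_⟩
      · exact mem_classOf W _
      · exact mem_classOf W _
      · rintro y ⟨⟨hyne, sy, hsyS, rfl⟩, hpy⟩
        rw [classOf_eq W hsyS (mem_restrictRel.mp hpy)]
  diag_isRelation := by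
    refine ⟨{t | t.Nonempty ∧ ∃ e ∈ W.S, e ⊆ diagRel Set.univ ∧ t = restrictRel D e},
      ?_, ?_⟩
    · rintro t ⟨htne, e, heS, hed, rfl⟩
      exact ⟨htne, e, heS, rfl⟩
    · ext ⟨x, y⟩
      constructor
      · rintro ⟨t, ⟨htne, e, heS, hed, rfl⟩, hxy⟩
        have : (x : A) = (y : A) := (hed (mem_restrictRel.mp hxy)).1
        exact ⟨Subtype.val_injective this, trivial⟩
      · rintro ⟨h1, -⟩
        have h1' : x = y := h1
        subst h1'
        refine ⟨restrictRel D (classOf W ((x : A), (x : A))),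
          ⟨⟨(x, x), mem_classOf W _⟩, classOf W ((x : A), (x : A)), classOf_mem W _,
            classOf_diag_subset W _, rfl⟩, mem_classOf W _⟩
  swap_mem := by
    rintro t ⟨⟨q, hq⟩, s₀, hs₀S, rfl⟩
    refine ⟨⟨(q.2, q.1), hq⟩, swapRel s₀, swapRel_mem W hs₀S, rfl⟩
  coherent := by
    rintro r ⟨hrne, r₀, hr₀S, rfl⟩ s ⟨hsne, s₀, hs₀S, rfl⟩ t ⟨htne, t₀, ht₀S, rfl⟩
      p hp q hq
    rcases fiber_dichotomy_tgt W hD hr₀S with h | h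
    · rw [restrict_interNum_of_into h, restrict_interNum_of_into h]
    · rw [restrict_interNum_of_avoid h, restrict_interNum_of_avoid h]
      exact W.coherent r₀ hr₀S s₀ hs₀S t₀ ht₀S _ (mem_restrictRel.mp hp)
        _ (mem_restrictRel.mp hq)

end Restrict

section FiberIso

variable {A : Type u} {B : Type v} [Finite A] [Finite B]
variable {Z : CoherentConfiguration A} {Z' : CoherentConfiguration B}
variable (φ : AlgIso Z Z')

lemma iso_src_fiber_iff {D : Set A} {D' : Set B} (hD : diagRel D ∈ Z.S)
    (hD' : φ.toFun (diagRel D) = diagRel D') {s : Set (A × A)} (hs : s ∈ Z.S) :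
    (∀ p ∈ s, p.1 ∈ D) ↔ (∀ p' ∈ φ.toFun s, p'.1 ∈ D') := by
  constructor
  · intro h p' hp'
    have := iso_srcIn φ hD (diagRel_subset_univ _) hs
      (fun p hp => ⟨rfl, h p hp⟩) p' hp'
    rw [hD'] at this
    exact this.2
  · intro h
    obtain ⟨p₀, hp₀⟩ := class_nonempty Z hs
    have he : classOf Z (p₀.1, p₀.1) ∈ Z.S := classOf_mem Z _
    have hed : classOf Z (p₀.1, p₀.1) ⊆ diagRel Set.univ := classOf_diag_subset Z _
    have hall : ∀ p ∈ s, (p.1, p.1) ∈ classOf Z (p₀.1, p₀.1) := by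
      intro p hp
      exact source_mem_fiber Z hs (by simpa using hp₀) (by simpa using hp)
    obtain ⟨p', hp'⟩ := class_nonempty Z' (iso_mapsTo φ hs)
    have h1 : (p'.1, p'.1) ∈ φ.toFun (classOf Z (p₀.1, p₀.1)) :=
      iso_srcIn φ he hed hs hall p' hp'
    have h2 : (p'.1, p'.1) ∈ φ.toFun (diagRel D) := by
      rw [hD']; exact ⟨rfl, h p' hp'⟩
    have h3 : classOf Z (p₀.1, p₀.1) = diagRel D :=
      iso_inj φ he hD (class_eq Z' (iso_mapsTo φ he) (iso_mapsTo φ hD) h1 h2)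
    intro p hp
    have := hall p hp
    rw [h3] at this
    exact this.2

lemma iso_tgt_fiber_iff {D : Set A} {D' : Set B} (hD : diagRel D ∈ Z.S)
    (hD' : φ.toFun (diagRel D) = diagRel D') {s : Set (A × A)} (hs : s ∈ Z.S) :
    (∀ p ∈ s, p.2 ∈ D) ↔ (∀ p' ∈ φ.toFun s, p'.2 ∈ D') := by
  have h := iso_src_fiber_iff φ hD hD' (swapRel_mem Z hs)
  rw [iso_swapRel φ hs] at h
  constructor
  · intro hh p' hp'
    exact h.mp (fun p hp => hh (p.2, p.1) hp) (p'.2, p'.1) (mem_swapRel.mpr (by simpa using hp'))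
  · intro hh p hp
    exact h.mpr (fun p' hp' => hh (p'.2, p'.1) hp') (p.2, p.1) (mem_swapRel.mpr (by simpa using hp))

lemma iso_src_fiber_notin {D : Set A} {D' : Set B} (hD : diagRel D ∈ Z.S)
    (hD' : φ.toFun (diagRel D) = diagRel D') {s : Set (A × A)} (hs : s ∈ Z.S) :
    (∀ p ∈ s, p.1 ∉ D) ↔ (∀ p' ∈ φ.toFun s, p'.1 ∉ D') := by
  have hD'S : diagRel D' ∈ Z'.S := hD' ▸ iso_mapsTo φ hD
  constructor
  · intro h
    rcases fiber_dichotomy_src Z' hD'S (iso_mapsTo φ hs) with h' | h'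
    · obtain ⟨p₀, hp₀⟩ := class_nonempty Z hs
      exact absurd ((iso_src_fiber_iff φ hD hD' hs).mpr h' p₀ hp₀) (h p₀ hp₀)
    · exact h'
  · intro h
    rcases fiber_dichotomy_src Z hD hs with h' | h'
    · obtain ⟨p₀', hp₀'⟩ := class_nonempty Z' (iso_mapsTo φ hs)
      exact absurd ((iso_src_fiber_iff φ hD hD' hs).mp h' p₀' hp₀') (h p₀' hp₀')
    · exact h'

lemma iso_tgt_fiber_notin {D : Set A} {D' : Set B} (hD : diagRel D ∈ Z.S)
    (hD' : φ.toFun (diagRel D) = diagRel D') {s : Set (A × A)} (hs : s ∈ Z.S) :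
    (∀ p ∈ s, p.2 ∉ D) ↔ (∀ p' ∈ φ.toFun s, p'.2 ∉ D') := by
  have h := iso_src_fiber_notin φ hD hD' (swapRel_mem Z hs)
  rw [iso_swapRel φ hs] at h
  constructor
  · intro hh p' hp'
    exact h.mp (fun p hp => hh (p.2, p.1) hp) (p'.2, p'.1) (mem_swapRel.mpr (by simpa using hp'))
  · intro hh p hp
    exact h.mpr (fun p' hp' => hh (p'.2, p'.1) hp') (p.2, p.1) (mem_swapRel.mpr (by simpa using hp))

end FiberIso

lemma swapRel_map_image {A : Type u} {B : Type v} (f : A → B) (u : Set (A × A)) :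
    swapRel (Prod.map f f '' u) = Prod.map f f '' (swapRel u) := by
  ext ⟨x, y⟩
  constructor
  · rintro ⟨⟨a, b⟩, hab, heq⟩
    refine ⟨(b, a), hab, ?_⟩
    have h1 : f a = y := congrArg Prod.fst heq
    have h2 : f b = x := congrArg Prod.snd heq
    show (f b, f a) = (x, y)
    rw [h1, h2]
  · rintro ⟨⟨b, a⟩, hba, heq⟩
    refine ⟨(a, b), hba, ?_⟩
    have h1 : f b = x := congrArg Prod.fst heq
    have h2 : f a = y := congrArg Prod.snd heq
    show (f a, f b) = (y, x)
    rw [h1, h2]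

section DirA

variable {Ω : Type u} [Finite Ω]

lemma dirA (X : CoherentConfiguration Ω)
    {m : Set (Ω × Ω)} (hmS : m ∈ X.S)
    (hfun : ∀ a b c, (a, b) ∈ m → (a, c) ∈ m → b = c)
    (hinj : ∀ a b c, (a, c) ∈ m → (b, c) ∈ m → a = b)
    (hne : OmegaMinus m ≠ OmegaPlus m)
    (Y : CoherentConfiguration ↥((OmegaMinus m)ᶜ))
    (hY : Y.S = {t | t.Nonempty ∧ ∃ s ∈ X.S, t = restrictRel (OmegaMinus m) s})
    (hsepY : CCSeparable Y) : CCSeparable X := by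
  intro Ω' hfin' X' φ
  -- X-side structure
  obtain ⟨p₀, hp₀⟩ := class_nonempty X hmS
  have hΔfib : diagRel (OmegaMinus m) ∈ X.S := minus_diag_mem hmS
  have hΓfib : diagRel (OmegaPlus m) ∈ X.S := plus_diag_mem hmS
  have hΔΓ : ∀ x, x ∈ OmegaMinus m → x ∈ OmegaPlus m → False := by
    intro x h1 h2
    apply hne
    have e1 : classOf X (x, x) = diagRel (OmegaMinus m) := classOf_eq X hΔfib ⟨rfl, h1⟩
    have e2 : classOf X (x, x) = diagRel (OmegaPlus m) := classOf_eq X hΓfib ⟨rfl, h2⟩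
    exact diagRel_injective (e1 ▸ e2)
  -- X'-side structure
  have hm'S : φ.toFun m ∈ X'.S := iso_mapsTo φ hmS
  have hfun' := iso_thin_fun φ hmS hfun
  have hinj' := iso_thin_inj φ hmS hinj
  have hΔ'eq : φ.toFun (diagRel (OmegaMinus m)) = diagRel (OmegaMinus (φ.toFun m)) :=
    iso_minus_diag φ hmS
  have hΓ'eq : φ.toFun (diagRel (OmegaPlus m)) = diagRel (OmegaPlus (φ.toFun m)) :=
    iso_plus_diag φ hmS
  have hΔ'fib : diagRel (OmegaMinus (φ.toFun m)) ∈ X'.S := hΔ'eq ▸ iso_mapsTo φ hΔfib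
  have hΓ'fib : diagRel (OmegaPlus (φ.toFun m)) ∈ X'.S := hΓ'eq ▸ iso_mapsTo φ hΓfib
  have hΔ'Γ' : ∀ x, x ∈ OmegaMinus (φ.toFun m) → x ∈ OmegaPlus (φ.toFun m) → False := by
    intro x h1 h2
    have e1 : classOf X' (x, x) = diagRel (OmegaMinus (φ.toFun m)) :=
      classOf_eq X' hΔ'fib ⟨rfl, h1⟩
    have e2 : classOf X' (x, x) = diagRel (OmegaPlus (φ.toFun m)) :=
      classOf_eq X' hΓ'fib ⟨rfl, h2⟩
    have e4 : diagRel (OmegaMinus m) = diagRel (OmegaPlus m) :=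
      iso_inj φ hΔfib hΓfib (by rw [hΔ'eq, hΓ'eq, ← e1, ← e2])
    exact hne (diagRel_injective e4)
  -- the restricted configuration on the image side
  set Y' := restrictCC X' (OmegaMinus (φ.toFun m)) hΔ'fib with hY'def
  -- the restriction of φ
  set ψfun : Set (↥((OmegaMinus m)ᶜ) × ↥((OmegaMinus m)ᶜ)) →
      Set (↥((OmegaMinus (φ.toFun m))ᶜ) × ↥((OmegaMinus (φ.toFun m))ᶜ)) :=
    fun t => restrictRel (OmegaMinus (φ.toFun m))
      (φ.toFun (⋃ p ∈ t, classOf X ((p.1 : Ω), (p.2 : Ω)))) with hψdef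
  have hψval : ∀ s ∈ X.S, (restrictRel (OmegaMinus m) s).Nonempty →
      ψfun (restrictRel (OmegaMinus m) s)
        = restrictRel (OmegaMinus (φ.toFun m)) (φ.toFun s) := by
    rintro s hsS ⟨q, hq⟩
    have hU : (⋃ p ∈ restrictRel (OmegaMinus m) s,
        classOf X ((p.1 : Ω), (p.2 : Ω))) = s := by
      apply le_antisymm
      · intro x hx
        obtain ⟨p, hp, hx'⟩ := Set.mem_iUnion₂.mp hx
        rwa [classOf_eq X hsS (mem_restrictRel.mp hp)] at hx'
      · intro x hx
        have hs' : s = classOf X ((q.1 : Ω), (q.2 : Ω)) :=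
          (classOf_eq X hsS (mem_restrictRel.mp hq)).symm
        exact Set.mem_biUnion hq (hs' ▸ hx)
    rw [hψdef]
    dsimp only
    rw [hU]
  -- avoidance facts
  have havoid : ∀ s ∈ X.S, (restrictRel (OmegaMinus m) s).Nonempty →
      (∀ p ∈ s, p.1 ∉ OmegaMinus m) ∧ (∀ p ∈ s, p.2 ∉ OmegaMinus m) := by
    rintro s hsS ⟨q, hq⟩
    constructor
    · rcases fiber_dichotomy_src X hΔfib hsS with h | h
      · exact absurd (h _ (mem_restrictRel.mp hq)) q.1.2
      · exact h
    · rcases fiber_dichotomy_tgt X hΔfib hsS with h | h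
      · exact absurd (h _ (mem_restrictRel.mp hq)) q.2.2
      · exact h
  have havoid' : ∀ s ∈ X.S, (∀ p ∈ s, p.1 ∉ OmegaMinus m) →
      (∀ p ∈ s, p.2 ∉ OmegaMinus m) →
      (∀ p' ∈ φ.toFun s, p'.1 ∉ OmegaMinus (φ.toFun m)) ∧
      (∀ p' ∈ φ.toFun s, p'.2 ∉ OmegaMinus (φ.toFun m)) ∧
      (restrictRel (OmegaMinus (φ.toFun m)) (φ.toFun s)).Nonempty := by
    intro s hsS h1 h2
    have h1' := (iso_src_fiber_notin φ hΔfib hΔ'eq hsS).mp h1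
    have h2' := (iso_tgt_fiber_notin φ hΔfib hΔ'eq hsS).mp h2
    refine ⟨h1', h2', ?_⟩
    obtain ⟨⟨a, b⟩, hab⟩ := class_nonempty X' (iso_mapsTo φ hsS)
    exact ⟨(⟨a, h1' _ hab⟩, ⟨b, h2' _ hab⟩), hab⟩
  -- the algebraic isomorphism between the restrictions
  have hYmem : ∀ t, t ∈ Y.S ↔
      (t.Nonempty ∧ ∃ s ∈ X.S, t = restrictRel (OmegaMinus m) s) := by
    intro t; rw [hY]; exact Iff.rfl
  have hbij : Set.BijOn ψfun Y.S Y'.S := by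
    refine ⟨?_, ?_, ?_⟩
    · intro t ht
      obtain ⟨htne, s, hsS, rfl⟩ := (hYmem t).mp ht
      rw [hψval s hsS htne]
      obtain ⟨h1, h2⟩ := havoid s hsS htne
      obtain ⟨h1', h2', hne'⟩ := havoid' s hsS h1 h2
      exact ⟨hne', φ.toFun s, iso_mapsTo φ hsS, rfl⟩
    · intro t₁ ht₁ t₂ ht₂ heq
      obtain ⟨ht₁ne, s₁, hs₁S, rfl⟩ := (hYmem t₁).mp ht₁
      obtain ⟨ht₂ne, s₂, hs₂S, rfl⟩ := (hYmem t₂).mp ht₂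
      rw [hψval s₁ hs₁S ht₁ne, hψval s₂ hs₂S ht₂ne] at heq
      obtain ⟨h1, h2⟩ := havoid s₁ hs₁S ht₁ne
      obtain ⟨-, -, q', hq'⟩ := havoid' s₁ hs₁S h1 h2
      have hq'2 : q' ∈ restrictRel (OmegaMinus (φ.toFun m)) (φ.toFun s₂) := heq ▸ hq'
      have heq2 : φ.toFun s₁ = φ.toFun s₂ :=
        class_eq X' (iso_mapsTo φ hs₁S) (iso_mapsTo φ hs₂S)
          (mem_restrictRel.mp hq') (mem_restrictRel.mp hq'2)
      rw [iso_inj φ hs₁S hs₂S heq2]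
    · intro t' ht'
      obtain ⟨ht'ne, s', hs'S, rfl⟩ := ht'
      obtain ⟨s, hsS, rfl⟩ := iso_surj φ hs'S
      have h1' : ∀ p' ∈ φ.toFun s, p'.1 ∉ OmegaMinus (φ.toFun m) := by
        rcases fiber_dichotomy_src X' hΔ'fib (iso_mapsTo φ hsS) with h | h
        · obtain ⟨q', hq'⟩ := ht'ne
          exact absurd (h _ (mem_restrictRel.mp hq')) q'.1.2
        · exact h
      have h2' : ∀ p' ∈ φ.toFun s, p'.2 ∉ OmegaMinus (φ.toFun m) := by
        rcases fiber_dichotomy_tgt X' hΔ'fib (iso_mapsTo φ hsS) with h | h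
        · obtain ⟨q', hq'⟩ := ht'ne
          exact absurd (h _ (mem_restrictRel.mp hq')) q'.2.2
        · exact h
      have h1 := (iso_src_fiber_notin φ hΔfib hΔ'eq hsS).mpr h1'
      have h2 := (iso_tgt_fiber_notin φ hΔfib hΔ'eq hsS).mpr h2'
      have htne : (restrictRel (OmegaMinus m) s).Nonempty := by
        obtain ⟨⟨a, b⟩, hab⟩ := class_nonempty X hsS
        exact ⟨(⟨a, h1 _ hab⟩, ⟨b, h2 _ hab⟩), hab⟩
      exact ⟨restrictRel (OmegaMinus m) s, (hYmem _).mpr ⟨htne, s, hsS, rfl⟩,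
        hψval s hsS htne⟩
  have hcard : ∀ r ∈ Y.S, ∀ s ∈ Y.S, ∀ t ∈ Y.S, ∀ p ∈ t, ∀ p' ∈ ψfun t,
      interNum r s p = interNum (ψfun r) (ψfun s) p' := by
    intro r hr s hs t ht p hp p' hp'
    obtain ⟨hrne, r₀, hr₀S, rfl⟩ := (hYmem r).mp hr
    obtain ⟨hsne, s₀, hs₀S, rfl⟩ := (hYmem s).mp hs
    obtain ⟨htne, t₀, ht₀S, rfl⟩ := (hYmem t).mp ht
    obtain ⟨hr1, hr2⟩ := havoid r₀ hr₀S hrne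
    obtain ⟨hr1', hr2', -⟩ := havoid' r₀ hr₀S hr1 hr2
    rw [hψval r₀ hr₀S hrne, hψval s₀ hs₀S hsne]
    rw [hψval t₀ ht₀S htne] at hp'
    rw [restrict_interNum_of_avoid hr2 p, restrict_interNum_of_avoid hr2' p']
    exact φ.card_eq r₀ hr₀S s₀ hs₀S t₀ ht₀S _ (mem_restrictRel.mp hp)
      _ (mem_restrictRel.mp hp')
  obtain ⟨g, hgbij, hg⟩ := hsepY ↥((OmegaMinus (φ.toFun m))ᶜ)
    (Subtype.finite) Y' ⟨ψfun, hbij, hcard⟩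
  replace hg : ∀ t ∈ Y.S, ψfun t = Prod.map g g '' t := hg
  -- g maps the Γ-fiber onto the Γ'-fiber
  have htΓmem : restrictRel (OmegaMinus m) (diagRel (OmegaPlus m)) ∈ Y.S := by
    refine (hYmem _).mpr ⟨?_, diagRel (OmegaPlus m), hΓfib, rfl⟩
    have hγ₀ : p₀.2 ∈ OmegaPlus m := ⟨p₀.1, by simpa using hp₀⟩
    exact ⟨(⟨p₀.2, fun h => hΔΓ _ h hγ₀⟩, ⟨p₀.2, fun h => hΔΓ _ h hγ₀⟩), ⟨rfl, hγ₀⟩⟩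
  have hψΓ : ψfun (restrictRel (OmegaMinus m) (diagRel (OmegaPlus m)))
      = restrictRel (OmegaMinus (φ.toFun m)) (diagRel (OmegaPlus (φ.toFun m))) := by
    rw [hψval _ hΓfib ((hYmem _).mp htΓmem).1, hΓ'eq]
  have hgtΓ := hg _ htΓmem
  have hgΓ : ∀ x : ↥((OmegaMinus m)ᶜ), (x : Ω) ∈ OmegaPlus m →
      ((g x : ↥((OmegaMinus (φ.toFun m))ᶜ)) : Ω') ∈ OmegaPlus (φ.toFun m) := by
    intro x hx
    have h1 : (x, x) ∈ restrictRel (OmegaMinus m) (diagRel (OmegaPlus m)) := ⟨rfl, hx⟩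
    have h2 : (g x, g x) ∈ ψfun (restrictRel (OmegaMinus m) (diagRel (OmegaPlus m))) := by
      rw [hgtΓ]; exact ⟨(x, x), h1, rfl⟩
    rw [hψΓ] at h2
    exact (mem_restrictRel.mp h2).2
  have hgΓ' : ∀ x' : ↥((OmegaMinus (φ.toFun m))ᶜ), (x' : Ω') ∈ OmegaPlus (φ.toFun m) →
      ∃ y : ↥((OmegaMinus m)ᶜ), ((y : Ω) ∈ OmegaPlus m ∧ g y = x') := by
    intro x' hx'
    have h2 : (x', x') ∈ ψfun (restrictRel (OmegaMinus m) (diagRel (OmegaPlus m))) := by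
      rw [hψΓ]; exact ⟨rfl, hx'⟩
    rw [hgtΓ] at h2
    obtain ⟨⟨y₁, y₂⟩, hy, heq⟩ := h2
    exact ⟨y₁, (mem_restrictRel.mp hy).2, congrArg Prod.fst heq⟩
  -- the extension of g to all of Ω
  have H : ∀ α : Ω, ∃ β : Ω', (∀ hα : α ∉ OmegaMinus m, β = ↑(g ⟨α, hα⟩)) ∧
      (α ∈ OmegaMinus m → ∃ b, ∃ hb : b ∉ OmegaMinus m,
        (α, b) ∈ m ∧ (β, ↑(g ⟨b, hb⟩)) ∈ φ.toFun m) := by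
    intro α
    by_cases hα : α ∈ OmegaMinus m
    · obtain ⟨b, hb⟩ := hα
      have hbΓ : b ∈ OmegaPlus m := ⟨α, hb⟩
      have hbΔ : b ∉ OmegaMinus m := fun h => hΔΓ _ h hbΓ
      obtain ⟨β, hβ⟩ := hgΓ ⟨b, hbΔ⟩ hbΓ
      exact ⟨β, fun h => absurd ⟨b, hb⟩ h, fun _ => ⟨b, hbΔ, hb, hβ⟩⟩
    · exact ⟨↑(g ⟨α, hα⟩), fun h => rfl, fun h => absurd h hα⟩
  choose f hf1 hf2 using H
  have hfΔ' : ∀ α, α ∈ OmegaMinus m → f α ∈ OmegaMinus (φ.toFun m) := by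
    intro α hα
    obtain ⟨b, hb, hmb, hm'b⟩ := hf2 α hα
    exact ⟨_, hm'b⟩
  have hfinj : Function.Injective f := by
    intro α₁ α₂ h
    by_cases h₁ : α₁ ∈ OmegaMinus m <;> by_cases h₂ : α₂ ∈ OmegaMinus m
    · obtain ⟨b₁, hb₁, hm₁, hm'₁⟩ := hf2 α₁ h₁
      obtain ⟨b₂, hb₂, hm₂, hm'₂⟩ := hf2 α₂ h₂
      rw [h] at hm'₁
      have e1 : (↑(g ⟨b₁, hb₁⟩) : Ω') = ↑(g ⟨b₂, hb₂⟩) := hfun' _ _ _ hm'₁ hm'₂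
      have e3 : b₁ = b₂ := congrArg Subtype.val (hgbij.1 (Subtype.val_injective e1))
      rw [e3] at hm₁
      exact hinj _ _ _ hm₁ hm₂
    · exact absurd (h ▸ hfΔ' α₁ h₁) (by rw [hf1 α₂ h₂]; exact (g ⟨α₂, h₂⟩).2)
    · exact absurd (h.symm ▸ hfΔ' α₂ h₂) (by rw [hf1 α₁ h₁]; exact (g ⟨α₁, h₁⟩).2)
    · have e : (↑(g ⟨α₁, h₁⟩) : Ω') = ↑(g ⟨α₂, h₂⟩) := by
        rw [← hf1 α₁ h₁, ← hf1 α₂ h₂]; exact h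
      exact congrArg Subtype.val (hgbij.1 (Subtype.val_injective e))
  have hfsurj : Function.Surjective f := by
    intro x'
    by_cases hx' : x' ∈ OmegaMinus (φ.toFun m)
    · obtain ⟨c', hc'⟩ := hx'
      have hc'Γ : c' ∈ OmegaPlus (φ.toFun m) := ⟨x', hc'⟩
      have hc'Δ : c' ∉ OmegaMinus (φ.toFun m) := fun h => hΔ'Γ' _ h hc'Γ
      obtain ⟨y, hyΓ, hgy⟩ := hgΓ' ⟨c', hc'Δ⟩ hc'Γ
      obtain ⟨δ, hδ⟩ := hyΓ
      have hδΔ : δ ∈ OmegaMinus m := ⟨↑y, hδ⟩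
      obtain ⟨b, hb, hmb, hm'b⟩ := hf2 δ hδΔ
      have e2 : (⟨b, hb⟩ : ↥((OmegaMinus m)ᶜ)) = y :=
        Subtype.ext (by simpa using hfun _ _ _ hmb hδ)
      rw [e2, hgy] at hm'b
      exact ⟨δ, hinj' _ _ _ hm'b hc'⟩
    · obtain ⟨y, hy⟩ := hgbij.2 ⟨x', hx'⟩
      refine ⟨↑y, ?_⟩
      rw [hf1 ↑y y.2, show (⟨↑y, y.2⟩ : ↥((OmegaMinus m)ᶜ)) = y from rfl, hy]
  -- relations avoiding Δ
  have caseA : ∀ s ∈ X.S, (∀ p ∈ s, p.1 ∉ OmegaMinus m) →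
      (∀ p ∈ s, p.2 ∉ OmegaMinus m) → φ.toFun s = Prod.map f f '' s := by
    intro s hsS h1 h2
    have htne : (restrictRel (OmegaMinus m) s).Nonempty := by
      obtain ⟨⟨a, b⟩, hab⟩ := class_nonempty X hsS
      exact ⟨(⟨a, h1 _ hab⟩, ⟨b, h2 _ hab⟩), hab⟩
    have htY : restrictRel (OmegaMinus m) s ∈ Y.S := (hYmem _).mpr ⟨htne, s, hsS, rfl⟩
    have himg := hg _ htY
    rw [hψval s hsS htne] at himg
    obtain ⟨h1', h2', -⟩ := havoid' s hsS h1 h2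
    ext ⟨x, y⟩
    constructor
    · intro hxy
      have hx : x ∉ OmegaMinus (φ.toFun m) := h1' (x, y) hxy
      have hy : y ∉ OmegaMinus (φ.toFun m) := h2' (x, y) hxy
      have hmem : (⟨x, hx⟩, ⟨y, hy⟩) ∈
          restrictRel (OmegaMinus (φ.toFun m)) (φ.toFun s) := hxy
      rw [himg] at hmem
      obtain ⟨⟨u, v⟩, huv, heq⟩ := hmem
      refine ⟨(↑u, ↑v), huv, ?_⟩
      have e1 : g u = ⟨x, hx⟩ := congrArg Prod.fst heq
      have e2 : g v = ⟨y, hy⟩ := congrArg Prod.snd heq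
      show (f ↑u, f ↑v) = (x, y)
      rw [hf1 ↑u u.2, hf1 ↑v v.2,
        show (⟨↑u, u.2⟩ : ↥((OmegaMinus m)ᶜ)) = u from rfl,
        show (⟨↑v, v.2⟩ : ↥((OmegaMinus m)ᶜ)) = v from rfl, e1, e2]
    · rintro ⟨⟨a, b⟩, hab, heq⟩
      have ha : a ∉ OmegaMinus m := h1 _ hab
      have hb : b ∉ OmegaMinus m := h2 _ hab
      have hmem : (⟨a, ha⟩, ⟨b, hb⟩) ∈ restrictRel (OmegaMinus m) s := hab
      have hmem2 : (g ⟨a, ha⟩, g ⟨b, hb⟩) ∈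
          restrictRel (OmegaMinus (φ.toFun m)) (φ.toFun s) := by
        rw [himg]; exact ⟨_, hmem, rfl⟩
      have hval : ((↑(g ⟨a, ha⟩) : Ω'), (↑(g ⟨b, hb⟩) : Ω')) ∈ φ.toFun s := hmem2
      rw [← heq]
      show (f a, f b) ∈ φ.toFun s
      rw [hf1 a ha, hf1 b hb]
      exact hval
  -- pushing a composition with m through f
  have compPush : ∀ r₀ : Set (Ω × Ω), (∀ p ∈ r₀, p.1 ∈ OmegaPlus m) →
      relComp (φ.toFun m) (Prod.map f f '' r₀) = Prod.map f f '' (relComp m r₀) := by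
    intro r₀ hr₀Γ
    ext ⟨x, y⟩
    constructor
    · rintro ⟨c', hc'm', ⟨u, v⟩, huv, heq⟩
      have e1 : f u = c' := congrArg Prod.fst heq
      have e2 : f v = y := congrArg Prod.snd heq
      obtain ⟨δ, hδ⟩ := hr₀Γ _ huv
      have hδΔ : δ ∈ OmegaMinus m := ⟨u, hδ⟩
      obtain ⟨b, hb, hmb, hm'b⟩ := hf2 δ hδΔ
      have eb : b = u := hfun _ _ _ hmb hδ
      have huΔ : u ∉ OmegaMinus m := eb ▸ hb
      have e4 : (⟨b, hb⟩ : ↥((OmegaMinus m)ᶜ)) = ⟨u, huΔ⟩ := Subtype.ext eb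
      rw [e4] at hm'b
      rw [← hf1 u huΔ, e1] at hm'b
      have ex : x = f δ := hinj' _ _ _ hc'm' hm'b
      refine ⟨(δ, v), ⟨u, hδ, huv⟩, ?_⟩
      show (f δ, f v) = (x, y)
      rw [← ex, e2]
    · rintro ⟨⟨a, b⟩, ⟨u, hau, hub⟩, heq⟩
      have haΔ : a ∈ OmegaMinus m := ⟨u, hau⟩
      obtain ⟨c, hc, hmc, hm'c⟩ := hf2 a haΔ
      have ec : c = u := hfun _ _ _ hmc hau
      have huΔ : u ∉ OmegaMinus m := ec ▸ hc
      have e4 : (⟨c, hc⟩ : ↥((OmegaMinus m)ᶜ)) = ⟨u, huΔ⟩ := Subtype.ext ec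
      rw [e4] at hm'c
      rw [← hf1 u huΔ] at hm'c
      have e1 : f a = x := congrArg Prod.fst heq
      have e2 : f b = y := congrArg Prod.snd heq
      refine ⟨f u, ?_, (u, b), hub, ?_⟩
      · rw [← e1]; exact hm'c
      · show (f u, f b) = (f u, y)
        rw [e2]
  have caseB : ∀ s ∈ X.S, (∀ p ∈ s, p.1 ∈ OmegaMinus m) →
      (∀ p ∈ s, p.2 ∉ OmegaMinus m) → φ.toFun s = Prod.map f f '' s := by
    intro s hsS hsrc htgt
    have hsrcΓ : ∀ p ∈ relComp (swapRel m) s, p.1 ∈ OmegaPlus m := by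
      rintro p ⟨c, h1, h2⟩
      exact ⟨c, h1⟩
    have hrS : relComp (swapRel m) s ∈ X.S :=
      relComp_thin_mem X (swapRel_mem X hmS) (fun a b c h1 h2 => hinj _ _ _ h1 h2)
        (fun a b c h1 h2 => hfun _ _ _ h1 h2) hsS
        (by rw [OmegaPlus_swapRel]; exact hsrc)
    have hseq : relComp m (relComp (swapRel m) s) = s := relComp_swap_cancel hinj hsrc
    have hφs : φ.toFun s = relComp (φ.toFun m) (φ.toFun (relComp (swapRel m) s)) := by
      conv_lhs => rw [← hseq]
      exact iso_relComp_thin φ hmS hfun hinj hrS hsrcΓ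
    have hr1 : ∀ p ∈ relComp (swapRel m) s, p.1 ∉ OmegaMinus m :=
      fun p hp h => hΔΓ _ h (hsrcΓ p hp)
    have hr2 : ∀ p ∈ relComp (swapRel m) s, p.2 ∉ OmegaMinus m := by
      rintro p ⟨c, h1, h2⟩
      exact htgt (c, p.2) h2
    have hφr := caseA _ hrS hr1 hr2
    rw [hφs, hφr, compPush _ hsrcΓ, hseq]
  have caseC : ∀ s ∈ X.S, (∀ p ∈ s, p.1 ∉ OmegaMinus m) →
      (∀ p ∈ s, p.2 ∈ OmegaMinus m) → φ.toFun s = Prod.map f f '' s := by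
    intro s hsS hsrc htgt
    have hu := caseB (swapRel s) (swapRel_mem X hsS)
      (fun p hp => htgt (p.2, p.1) hp) (fun p hp => hsrc (p.2, p.1) hp)
    have hswap : φ.toFun s = swapRel (φ.toFun (swapRel s)) := by
      have h := iso_swapRel φ (swapRel_mem X hsS)
      rw [swapRel_swapRel] at h
      exact h
    rw [hswap, hu, swapRel_map_image, swapRel_swapRel]
  have caseD : ∀ s ∈ X.S, (∀ p ∈ s, p.1 ∈ OmegaMinus m) →
      (∀ p ∈ s, p.2 ∈ OmegaMinus m) → φ.toFun s = Prod.map f f '' s := by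
    intro s hsS hsrc htgt
    have hsrcΓ : ∀ p ∈ relComp (swapRel m) s, p.1 ∈ OmegaPlus m := by
      rintro p ⟨c, h1, h2⟩
      exact ⟨c, h1⟩
    have hrS : relComp (swapRel m) s ∈ X.S :=
      relComp_thin_mem X (swapRel_mem X hmS) (fun a b c h1 h2 => hinj _ _ _ h1 h2)
        (fun a b c h1 h2 => hfun _ _ _ h1 h2) hsS
        (by rw [OmegaPlus_swapRel]; exact hsrc)
    have hseq : relComp m (relComp (swapRel m) s) = s := relComp_swap_cancel hinj hsrc
    have hφs : φ.toFun s = relComp (φ.toFun m) (φ.toFun (relComp (swapRel m) s)) := by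
      conv_lhs => rw [← hseq]
      exact iso_relComp_thin φ hmS hfun hinj hrS hsrcΓ
    have hr1 : ∀ p ∈ relComp (swapRel m) s, p.1 ∉ OmegaMinus m :=
      fun p hp h => hΔΓ _ h (hsrcΓ p hp)
    have hr2 : ∀ p ∈ relComp (swapRel m) s, p.2 ∈ OmegaMinus m := by
      rintro p ⟨c, h1, h2⟩
      exact htgt (c, p.2) h2
    have hφr := caseC _ hrS hr1 hr2
    rw [hφs, hφr, compPush _ hsrcΓ, hseq]
  refine ⟨f, ⟨hfinj, hfsurj⟩, ?_⟩
  intro s hsS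
  rcases fiber_dichotomy_src X hΔfib hsS with hsrc | hsrc <;>
    rcases fiber_dichotomy_tgt X hΔfib hsS with htgt | htgt
  · exact caseD s hsS hsrc htgt
  · exact caseB s hsS hsrc htgt
  · exact caseC s hsS hsrc htgt
  · exact caseA s hsS hsrc htgt

end DirA

section PointIso

variable {A : Type u} {B : Type v}

lemma interNum_image_bij {h : A → B} (hinj : Function.Injective h)
    (r s : Set (A × A)) (a b : A) :
    interNum (Prod.map h h '' r) (Prod.map h h '' s) (h a, h b) = interNum r s (a, b) := by
  unfold interNum
  rw [show {γ' : B | ((h a, h b).1, γ') ∈ Prod.map h h '' r ∧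
      (γ', (h a, h b).2) ∈ Prod.map h h '' s}
      = h '' {γ : A | ((a, b).1, γ) ∈ r ∧ (γ, (a, b).2) ∈ s} from ?_]
  · exact Set.ncard_image_of_injective _ hinj
  · ext γ'
    constructor
    · rintro ⟨⟨⟨u, v⟩, huv, heq1⟩, ⟨⟨u₂, v₂⟩, huv₂, heq2⟩⟩
      have e1 : h u = h a := congrArg Prod.fst heq1
      have e2 : h v = γ' := congrArg Prod.snd heq1
      have e3 : h u₂ = γ' := congrArg Prod.fst heq2
      have e4 : h v₂ = h b := congrArg Prod.snd heq2
      have ea : u = a := hinj e1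
      have eb : v₂ = b := hinj e4
      have ev : u₂ = v := hinj (e3.trans e2.symm)
      subst ea eb ev
      exact ⟨_, ⟨huv, huv₂⟩, e2⟩
    · rintro ⟨γ, ⟨h1, h2⟩, rfl⟩
      exact ⟨⟨(a, γ), h1, rfl⟩, ⟨(γ, b), h2, rfl⟩⟩

end PointIso

section Comp2

variable {A : Type u} {B : Type v} {C : Type w} [Finite A] [Finite B] [Finite C]
variable {Z1 : CoherentConfiguration A} {Z2 : CoherentConfiguration B}
  {Z3 : CoherentConfiguration C}

/-- Composition of algebraic isomorphisms. -/
def algIsoComp (φ1 : AlgIso Z1 Z2) (φ2 : AlgIso Z2 Z3) : AlgIso Z1 Z3 where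
  toFun := φ2.toFun ∘ φ1.toFun
  bijOn := φ2.bijOn.comp φ1.bijOn
  card_eq := by
    intro r hr s hs t ht p hp p' hp'
    obtain ⟨p₁, hp₁⟩ := class_nonempty Z2 (iso_mapsTo φ1 ht)
    rw [φ1.card_eq r hr s hs t ht p hp p₁ hp₁]
    exact φ2.card_eq _ (iso_mapsTo φ1 hr) _ (iso_mapsTo φ1 hs) _ (iso_mapsTo φ1 ht)
      p₁ hp₁ p' hp'

end Comp2

section Dup

variable {C : Type u} [Finite C]

/-- Projection from the duplicated point set. -/
def dupQ (D : Set C) : C ⊕ ↥D → C := Sum.elim id Subtype.val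

/-- Lift of a relation to the duplicated point set, with prescribed sides. -/
def dupLift (D : Set C) (σ τ : Bool) (t : Set (C × C)) :
    Set ((C ⊕ ↥D) × (C ⊕ ↥D)) :=
  {p | p.1.isRight = σ ∧ p.2.isRight = τ ∧ (dupQ D p.1, dupQ D p.2) ∈ t}

lemma dup_eq_of {D : Set C} {x y : C ⊕ ↥D} (hs : x.isRight = y.isRight)
    (hq : dupQ D x = dupQ D y) : x = y := by
  cases x with
  | inl a =>
    cases y with
    | inl b => exact congrArg Sum.inl (hq : a = b)
    | inr b => exact absurd hs (by simp)
  | inr a =>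
    cases y with
    | inl b => exact absurd hs (by simp)
    | inr b => exact congrArg Sum.inr (Subtype.ext (hq : (a : C) = (b : C)))

lemma dup_swap (D : Set C) (σ τ : Bool) (t : Set (C × C)) :
    swapRel (dupLift D σ τ t) = dupLift D τ σ (swapRel t) := by
  ext p
  exact ⟨fun ⟨h1, h2, h3⟩ => ⟨h2, h1, h3⟩, fun ⟨h1, h2, h3⟩ => ⟨h2, h1, h3⟩⟩

/-- The number of points of `D` joining a pair. -/
noncomputable def DCount (D : Set C) (a b : Set (C × C)) (z : C × C) : ℕ :=
  {x | x ∈ D ∧ (z.1, x) ∈ a ∧ (x, z.2) ∈ b}.ncard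

lemma dup_interNum_zero {D : Set C} {σ1 τ1 σ2 τ2 : Bool} {a b : Set (C × C)}
    {p : (C ⊕ ↥D) × (C ⊕ ↥D)}
    (h : ¬(p.1.isRight = σ1 ∧ p.2.isRight = τ2 ∧ τ1 = σ2)) :
    interNum (dupLift D σ1 τ1 a) (dupLift D σ2 τ2 b) p = 0 := by
  unfold interNum
  rw [show {γ' | (p.1, γ') ∈ dupLift D σ1 τ1 a ∧ (γ', p.2) ∈ dupLift D σ2 τ2 b} = ∅
    from ?_]
  · exact Set.ncard_empty _
  · ext γ'
    simp only [Set.mem_empty_iff_false, iff_false, Set.mem_setOf_eq]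
    rintro ⟨⟨e1, e2, -⟩, ⟨e3, e4, -⟩⟩
    exact h ⟨e1, e4, e2.symm.trans e3⟩

lemma dup_interNum_mid {D : Set C} {σ1 τ1 σ2 τ2 : Bool} (hmid : τ1 = σ2)
    (a b : Set (C × C)) {p : (C ⊕ ↥D) × (C ⊕ ↥D)}
    (h1 : p.1.isRight = σ1) (h2 : p.2.isRight = τ2) :
    interNum (dupLift D σ1 τ1 a) (dupLift D σ2 τ2 b) p =
      (bif τ1 then DCount D a b (dupQ D p.1, dupQ D p.2)
        else interNum a b (dupQ D p.1, dupQ D p.2)) := by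
  subst hmid
  subst h1
  subst h2
  cases τ1 with
  | false =>
    show _ = interNum a b (dupQ D p.1, dupQ D p.2)
    unfold interNum
    rw [show {γ' | (p.1, γ') ∈ dupLift D p.1.isRight false a ∧
        (γ', p.2) ∈ dupLift D false p.2.isRight b}
        = Sum.inl '' {γ : C | ((dupQ D p.1, dupQ D p.2).1, γ) ∈ a ∧
            (γ, (dupQ D p.1, dupQ D p.2).2) ∈ b} from ?_]
    · exact Set.ncard_image_of_injective _ Sum.inl_injective
    · ext γ'
      constructor
      · rintro ⟨⟨e1, e2, e3⟩, ⟨e4, e5, e6⟩⟩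
        cases γ' with
        | inl x => exact ⟨x, ⟨e3, e6⟩, rfl⟩
        | inr x => exact absurd e2 (by simp)
      · rintro ⟨γ, ⟨hg1, hg2⟩, rfl⟩
        exact ⟨⟨rfl, rfl, hg1⟩, ⟨rfl, rfl, hg2⟩⟩
  | true =>
    show _ = DCount D a b (dupQ D p.1, dupQ D p.2)
    unfold interNum DCount
    rw [show {γ' | (p.1, γ') ∈ dupLift D p.1.isRight true a ∧
        (γ', p.2) ∈ dupLift D true p.2.isRight b}
        = Sum.inr '' {c : ↥D | ((dupQ D p.1, (c : C)) ∈ a ∧ ((c : C), dupQ D p.2) ∈ b)}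
        from ?_]
    · rw [Set.ncard_image_of_injective _ Sum.inr_injective]
      rw [show {x | x ∈ D ∧ ((dupQ D p.1, dupQ D p.2).1, x) ∈ a ∧
          (x, (dupQ D p.1, dupQ D p.2).2) ∈ b}
          = Subtype.val '' {c : ↥D | ((dupQ D p.1, (c : C)) ∈ a ∧ ((c : C), dupQ D p.2) ∈ b)}
          from ?_]
      · exact (Set.ncard_image_of_injective _ Subtype.val_injective).symm
      · ext x
        constructor
        · rintro ⟨hxD, hx1, hx2⟩
          exact ⟨⟨x, hxD⟩, ⟨hx1, hx2⟩, rfl⟩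
        · rintro ⟨c, ⟨hc1, hc2⟩, rfl⟩
          exact ⟨c.2, hc1, hc2⟩
    · ext γ'
      constructor
      · rintro ⟨⟨e1, e2, e3⟩, ⟨e4, e5, e6⟩⟩
        cases γ' with
        | inl x => exact absurd e2 (by simp)
        | inr c => exact ⟨c, ⟨e3, e6⟩, rfl⟩
      · rintro ⟨c, ⟨hg1, hg2⟩, rfl⟩
        exact ⟨⟨rfl, rfl, hg1⟩, ⟨rfl, rfl, hg2⟩⟩

lemma DCount_const (W : CoherentConfiguration C) {D : Set C} (hD : diagRel D ∈ W.S)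
    {a b c : Set (C × C)} (ha : a ∈ W.S) (hb : b ∈ W.S) (hc : c ∈ W.S)
    {z w : C × C} (hz : z ∈ c) (hw : w ∈ c) :
    DCount D a b z = DCount D a b w := by
  rcases fiber_dichotomy_tgt W hD ha with h | h
  · have he : ∀ u : C × C, DCount D a b u = interNum a b u := by
      intro u
      unfold DCount interNum
      congr 1
      ext x
      exact ⟨fun ⟨h1, h2, h3⟩ => ⟨h2, h3⟩, fun ⟨h2, h3⟩ => ⟨h (u.1, x) h2, h2, h3⟩⟩
    rw [he, he]
    exact W.coherent a ha b hb c hc z hz w hw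
  · have he : ∀ u : C × C, DCount D a b u = 0 := by
      intro u
      unfold DCount
      rw [show {x | x ∈ D ∧ (u.1, x) ∈ a ∧ (x, u.2) ∈ b} = ∅ from ?_]
      · exact Set.ncard_empty _
      · ext x
        simp only [Set.mem_empty_iff_false, iff_false, Set.mem_setOf_eq]
        rintro ⟨h1, h2, -⟩
        exact h (u.1, x) h2 h1
    rw [he, he]

/-- Duplication of a fiber of a coherent configuration. -/
def dupCC (W : CoherentConfiguration C) (D : Set C) (hD : diagRel D ∈ W.S) :
    CoherentConfiguration (C ⊕ ↥D) where
  S := {u | u.Nonempty ∧ ∃ σ τ, ∃ t ∈ W.S, u = dupLift D σ τ t}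
  isPartition := by
    constructor
    · rintro ⟨⟨p, hp⟩, -⟩
      exact hp
    · intro p
      refine ⟨dupLift D p.1.isRight p.2.isRight (classOf W (dupQ D p.1, dupQ D p.2)),
        ⟨⟨⟨p, rfl, rfl, mem_classOf W _⟩, p.1.isRight, p.2.isRight, _,
          classOf_mem W _, rfl⟩, rfl, rfl, mem_classOf W _⟩, ?_⟩
      rintro y ⟨⟨hyne, σ, τ, t, htS, rfl⟩, e1, e2, e3⟩
      rw [← e1, ← e2, classOf_eq W htS e3]
  diag_isRelation := by
    refine ⟨{u | (u.Nonempty ∧ ∃ σ τ, ∃ t ∈ W.S, u = dupLift D σ τ t) ∧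
      u ⊆ diagRel Set.univ}, fun u hu => hu.1, ?_⟩
    ext ⟨x, y⟩
    constructor
    · rintro ⟨u, ⟨-, hd⟩, hxy⟩
      exact hd hxy
    · rintro ⟨h1, -⟩
      have h1' : x = y := h1
      subst h1'
      refine ⟨dupLift D x.isRight x.isRight (classOf W (dupQ D x, dupQ D x)),
        ⟨⟨⟨(x, x), rfl, rfl, mem_classOf W _⟩, x.isRight, x.isRight, _,
          classOf_mem W _, rfl⟩, ?_⟩, rfl, rfl, mem_classOf W _⟩
      rintro ⟨z1, z2⟩ ⟨f1, f2, f3⟩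
      have : dupQ D z1 = dupQ D z2 := (classOf_diag_subset W _ f3).1
      exact ⟨dup_eq_of (f1.trans f2.symm) this, trivial⟩
  swap_mem := by
    rintro u ⟨⟨q, hq⟩, σ, τ, t, htS, rfl⟩
    exact ⟨⟨(q.2, q.1), hq⟩, τ, σ, swapRel t, swapRel_mem W htS,
      (dup_swap D σ τ t).symm ▸ rfl⟩
  coherent := by
    rintro r ⟨hrne, σ1, τ1, a, haS, rfl⟩ s ⟨hsne, σ2, τ2, b, hbS, rfl⟩
      t ⟨htne, σ3, τ3, c, hcS, rfl⟩ p hp q hq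
    obtain ⟨hp1, hp2, hpc⟩ := hp
    obtain ⟨hq1, hq2, hqc⟩ := hq
    by_cases h1 : σ1 = σ3
    · by_cases h2 : τ2 = τ3
      · by_cases h3 : τ1 = σ2
        · rw [dup_interNum_mid h3 a b (hp1.trans h1.symm) (hp2.trans h2.symm),
            dup_interNum_mid h3 a b (hq1.trans h1.symm) (hq2.trans h2.symm)]
          cases τ1 with
          | false => exact W.coherent a haS b hbS c hcS _ hpc _ hqc
          | true => exact DCount_const W hD haS hbS hcS hpc hqc
        · rw [dup_interNum_zero (fun hcon => h3 hcon.2.2),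
            dup_interNum_zero (fun hcon => h3 hcon.2.2)]
      · rw [dup_interNum_zero (fun hcon => h2 (hcon.2.1.symm.trans hp2)),
          dup_interNum_zero (fun hcon => h2 (hcon.2.1.symm.trans hq2))]
    · rw [dup_interNum_zero (fun hcon => h1 (hcon.1.symm.trans hp1)),
        dup_interNum_zero (fun hcon => h1 (hcon.1.symm.trans hq1))]

end Dup

section DupIso

variable {C : Type u} {C' : Type v} [Finite C] [Finite C']
variable {W : CoherentConfiguration C} {W' : CoherentConfiguration C'}

lemma DCount_eq_interNum {D : Set C} {a b : Set (C × C)} (h : ∀ p ∈ a, p.2 ∈ D)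
    (z : C × C) : DCount D a b z = interNum a b z := by
  unfold DCount interNum
  congr 1
  ext x
  exact ⟨fun ⟨h1, h2, h3⟩ => ⟨h2, h3⟩, fun ⟨h2, h3⟩ => ⟨h (z.1, x) h2, h2, h3⟩⟩

lemma DCount_eq_zero {D : Set C} {a b : Set (C × C)} (h : ∀ p ∈ a, p.2 ∉ D)
    (z : C × C) : DCount D a b z = 0 := by
  unfold DCount
  rw [show {x | x ∈ D ∧ (z.1, x) ∈ a ∧ (x, z.2) ∈ b} = ∅ from ?_]
  · exact Set.ncard_empty _
  · ext x
    simp only [Set.mem_empty_iff_false, iff_false, Set.mem_setOf_eq]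
    rintro ⟨h1, h2, -⟩
    exact h (z.1, x) h2 h1

lemma dupLift_nonempty {D : Set C} {σ τ : Bool} {t : Set (C × C)} (htne : t.Nonempty)
    (hσ : σ = true → ∀ p ∈ t, p.1 ∈ D) (hτ : τ = true → ∀ p ∈ t, p.2 ∈ D) :
    (dupLift D σ τ t).Nonempty := by
  obtain ⟨⟨x, y⟩, hxy⟩ := htne
  cases σ with
  | false =>
    cases τ with
    | false => exact ⟨(Sum.inl x, Sum.inl y), rfl, rfl, hxy⟩
    | true => exact ⟨(Sum.inl x, Sum.inr ⟨y, hτ rfl _ hxy⟩), rfl, rfl, hxy⟩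
  | true =>
    cases τ with
    | false => exact ⟨(Sum.inr ⟨x, hσ rfl _ hxy⟩, Sum.inl y), rfl, rfl, hxy⟩
    | true => exact ⟨(Sum.inr ⟨x, hσ rfl _ hxy⟩, Sum.inr ⟨y, hτ rfl _ hxy⟩), rfl, rfl, hxy⟩

lemma dup_src_all {D : Set C} (hD : diagRel D ∈ W.S) {τ : Bool} {t : Set (C × C)}
    (htS : t ∈ W.S) (hne : (dupLift D true τ t).Nonempty) : ∀ p ∈ t, p.1 ∈ D := by
  obtain ⟨p, h1, h2, h3⟩ := hne
  rcases fiber_dichotomy_src W hD htS with h | h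
  · exact h
  · exfalso
    cases hp1 : p.1 with
    | inl a => rw [hp1] at h1; exact absurd h1 (by simp)
    | inr c =>
      rw [hp1] at h3
      exact h _ h3 c.2
  
lemma dup_tgt_all {D : Set C} (hD : diagRel D ∈ W.S) {σ : Bool} {t : Set (C × C)}
    (htS : t ∈ W.S) (hne : (dupLift D σ true t).Nonempty) : ∀ p ∈ t, p.2 ∈ D := by
  obtain ⟨p, h1, h2, h3⟩ := hne
  rcases fiber_dichotomy_tgt W hD htS with h | h
  · exact h
  · exfalso
    cases hp2 : p.2 with
    | inl a => rw [hp2] at h2; exact absurd h2 (by simp)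
    | inr c =>
      rw [hp2] at h3
      exact h _ h3 c.2

open Classical in
/-- The lift of an algebraic isomorphism to duplicated configurations. -/
noncomputable def dupIsoFun (ψ : AlgIso W W') (D : Set C) (D' : Set C') :
    Set ((C ⊕ ↥D) × (C ⊕ ↥D)) → Set ((C' ⊕ ↥D') × (C' ⊕ ↥D')) :=
  fun u => if h : u.Nonempty then
    dupLift D' h.some.1.isRight h.some.2.isRight
      (ψ.toFun (classOf W (dupQ D h.some.1, dupQ D h.some.2)))
  else ∅

lemma dupIsoFun_val (ψ : AlgIso W W') {D : Set C} (D' : Set C') {σ τ : Bool}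
    {t : Set (C × C)} (htS : t ∈ W.S) (hne : (dupLift D σ τ t).Nonempty) :
    dupIsoFun ψ D D' (dupLift D σ τ t) = dupLift D' σ τ (ψ.toFun t) := by
  unfold dupIsoFun
  rw [dif_pos hne]
  obtain ⟨e1, e2, e3⟩ := hne.some_mem
  rw [e1, e2, classOf_eq W htS e3]

/-- The duplication of an algebraic isomorphism. -/
noncomputable def dupAlgIso (ψ : AlgIso W W') {D : Set C} {D' : Set C'}
    (hD : diagRel D ∈ W.S) (hD' : diagRel D' ∈ W'.S)
    (hψD : ψ.toFun (diagRel D) = diagRel D') :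
    AlgIso (dupCC W D hD) (dupCC W' D' hD') where
  toFun := dupIsoFun ψ D D'
  bijOn := by
    refine ⟨?_, ?_, ?_⟩
    · rintro u ⟨hune, σ, τ, t, htS, rfl⟩
      rw [dupIsoFun_val ψ D' htS hune]
      refine ⟨?_, σ, τ, ψ.toFun t, iso_mapsTo ψ htS, rfl⟩
      refine dupLift_nonempty (class_nonempty W' (iso_mapsTo ψ htS)) ?_ ?_
      · rintro rfl
        exact (iso_src_fiber_iff ψ hD hψD htS).mp (dup_src_all hD htS hune)
      · rintro rfl
        exact (iso_tgt_fiber_iff ψ hD hψD htS).mp (dup_tgt_all hD htS hune)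
    · rintro u₁ ⟨hu₁ne, σ₁, τ₁, t₁, ht₁S, rfl⟩ u₂ ⟨hu₂ne, σ₂, τ₂, t₂, ht₂S, rfl⟩ heq
      rw [dupIsoFun_val ψ D' ht₁S hu₁ne, dupIsoFun_val ψ D' ht₂S hu₂ne] at heq
      have hne' : (dupLift D' σ₁ τ₁ (ψ.toFun t₁)).Nonempty := by
        refine dupLift_nonempty (class_nonempty W' (iso_mapsTo ψ ht₁S)) ?_ ?_
        · rintro rfl
          exact (iso_src_fiber_iff ψ hD hψD ht₁S).mp (dup_src_all hD ht₁S hu₁ne)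
        · rintro rfl
          exact (iso_tgt_fiber_iff ψ hD hψD ht₁S).mp (dup_tgt_all hD ht₁S hu₁ne)
      obtain ⟨p, hp⟩ := hne'
      have hpb := heq ▸ hp
      obtain ⟨e1, e2, e3⟩ := hp
      obtain ⟨f1, f2, f3⟩ := hpb
      have et : t₁ = t₂ := iso_inj ψ ht₁S ht₂S
        (class_eq W' (iso_mapsTo ψ ht₁S) (iso_mapsTo ψ ht₂S) e3 f3)
      rw [← e1, ← f1, ← e2, ← f2, et]
    · rintro u' ⟨hu'ne, σ, τ, t', ht'S, rfl⟩
      obtain ⟨t, htS, rfl⟩ := iso_surj ψ ht'S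
      have hune : (dupLift D σ τ t).Nonempty := by
        refine dupLift_nonempty (class_nonempty W htS) ?_ ?_
        · rintro rfl
          exact (iso_src_fiber_iff ψ hD hψD htS).mpr (dup_src_all hD' (iso_mapsTo ψ htS) hu'ne)
        · rintro rfl
          exact (iso_tgt_fiber_iff ψ hD hψD htS).mpr (dup_tgt_all hD' (iso_mapsTo ψ htS) hu'ne)
      exact ⟨dupLift D σ τ t, ⟨hune, σ, τ, t, htS, rfl⟩, dupIsoFun_val ψ D' htS hune⟩
  card_eq := by
    rintro r ⟨hrne, σ1, τ1, a, haS, rfl⟩ s ⟨hsne, σ2, τ2, b, hbS, rfl⟩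
      t ⟨htne, σ3, τ3, c, hcS, rfl⟩ p hp p' hp'
    rw [dupIsoFun_val ψ D' haS hrne, dupIsoFun_val ψ D' hbS hsne]
    rw [dupIsoFun_val ψ D' hcS htne] at hp'
    obtain ⟨hp1, hp2, hp3⟩ := hp
    obtain ⟨hq1, hq2, hq3⟩ := hp'
    by_cases h1 : σ1 = σ3
    · by_cases h2 : τ2 = τ3
      · by_cases h3 : τ1 = σ2
        · rw [dup_interNum_mid h3 a b (hp1.trans h1.symm) (hp2.trans h2.symm),
            dup_interNum_mid h3 (ψ.toFun a) (ψ.toFun b) (hq1.trans h1.symm)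
              (hq2.trans h2.symm)]
          cases τ1 with
          | false => exact ψ.card_eq a haS b hbS c hcS _ hp3 _ hq3
          | true =>
            rcases fiber_dichotomy_tgt W hD haS with h | h
            · rw [DCount_eq_interNum h _, DCount_eq_interNum
                ((iso_tgt_fiber_iff ψ hD hψD haS).mp h) _]
              exact ψ.card_eq a haS b hbS c hcS _ hp3 _ hq3
            · rw [DCount_eq_zero h _, DCount_eq_zero
                ((iso_tgt_fiber_notin ψ hD hψD haS).mp h) _]
              rfl
        · rw [dup_interNum_zero (fun hcon => h3 hcon.2.2),
            dup_interNum_zero (fun hcon => h3 hcon.2.2)]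
      · rw [dup_interNum_zero (fun hcon => h2 (hcon.2.1.symm.trans hp2)),
          dup_interNum_zero (fun hcon => h2 (hcon.2.1.symm.trans hq2))]
    · rw [dup_interNum_zero (fun hcon => h1 (hcon.1.symm.trans hp1)),
        dup_interNum_zero (fun hcon => h1 (hcon.1.symm.trans hq1))]

end DupIso

section RelAlg

variable {A : Type u}

lemma relComp_assoc (r s t : Set (A × A)) :
    relComp (relComp r s) t = relComp r (relComp s t) := by
  ext ⟨x, y⟩
  constructor
  · rintro ⟨c, ⟨d, h1, h2⟩, h3⟩
    exact ⟨d, h1, c, h2, h3⟩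
  · rintro ⟨d, h1, c, h2, h3⟩
    exact ⟨c, ⟨d, h1, h2⟩, h3⟩

lemma relComp_swap_swap (r u : Set (A × A)) :
    relComp r u = swapRel (relComp (swapRel u) (swapRel r)) := by
  ext ⟨x, y⟩
  constructor
  · rintro ⟨c, h1, h2⟩
    exact ⟨c, h2, h1⟩
  · rintro ⟨c, h1, h2⟩
    exact ⟨c, h2, h1⟩

lemma relComp_right_cancel {μ u : Set (A × A)}
    (hfun : ∀ a b c, (a, b) ∈ μ → (a, c) ∈ μ → b = c)
    (htgt : ∀ p ∈ u, p.2 ∈ OmegaPlus μ) :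
    relComp (relComp u (swapRel μ)) μ = u := by
  ext ⟨x, γ⟩
  constructor
  · rintro ⟨δ, ⟨γ₂, h1, h2⟩, h3⟩
    have : γ = γ₂ := hfun _ _ _ h3 h2
    rw [this]; exact h1
  · intro h
    obtain ⟨δ, hδ⟩ := htgt _ h
    exact ⟨δ, ⟨γ, h, hδ⟩, hδ⟩

lemma relComp_right_cancel' {μ u : Set (A × A)}
    (hinj : ∀ a b c, (a, c) ∈ μ → (b, c) ∈ μ → a = b)
    (htgt : ∀ p ∈ u, p.2 ∈ OmegaMinus μ) :
    relComp (relComp u μ) (swapRel μ) = u := by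
  exact relComp_right_cancel (μ := swapRel μ) (u := u)
    (fun a b c h1 h2 => hinj _ _ _ h1 h2) htgt

end RelAlg

section DirB

variable {Ω : Type u} [Finite Ω]

lemma dirB (X : CoherentConfiguration Ω)
    {m : Set (Ω × Ω)} (hmS : m ∈ X.S)
    (hfun : ∀ a b c, (a, b) ∈ m → (a, c) ∈ m → b = c)
    (hinj : ∀ a b c, (a, c) ∈ m → (b, c) ∈ m → a = b)
    (hne : OmegaMinus m ≠ OmegaPlus m)
    (Y : CoherentConfiguration ↥((OmegaMinus m)ᶜ))
    (hY : Y.S = {t | t.Nonempty ∧ ∃ s ∈ X.S, t = restrictRel (OmegaMinus m) s})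
    (hsepX : CCSeparable X) : CCSeparable Y := by
  intro Ω'' hfin'' Y'' ψ
  obtain ⟨p₀, hp₀⟩ := class_nonempty X hmS
  have hΔfib : diagRel (OmegaMinus m) ∈ X.S := minus_diag_mem hmS
  have hΓfib : diagRel (OmegaPlus m) ∈ X.S := plus_diag_mem hmS
  have hΔΓ : ∀ x, x ∈ OmegaMinus m → x ∈ OmegaPlus m → False := by
    intro x h1 h2
    apply hne
    have e1 : classOf X (x, x) = diagRel (OmegaMinus m) := classOf_eq X hΔfib ⟨rfl, h1⟩
    have e2 : classOf X (x, x) = diagRel (OmegaPlus m) := classOf_eq X hΓfib ⟨rfl, h2⟩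
    exact diagRel_injective (e1 ▸ e2)
  have hYmem : ∀ t, t ∈ Y.S ↔
      (t.Nonempty ∧ ∃ s ∈ X.S, t = restrictRel (OmegaMinus m) s) := by
    intro t; rw [hY]; exact Iff.rfl
  have havoid : ∀ s ∈ X.S, (restrictRel (OmegaMinus m) s).Nonempty →
      (∀ p ∈ s, p.1 ∉ OmegaMinus m) ∧ (∀ p ∈ s, p.2 ∉ OmegaMinus m) := by
    rintro s hsS ⟨q, hq⟩
    constructor
    · rcases fiber_dichotomy_src X hΔfib hsS with hpt | hpt
      · exact absurd (hpt _ (mem_restrictRel.mp hq)) q.1.2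
      · exact hpt
    · rcases fiber_dichotomy_tgt X hΔfib hsS with hpt | hpt
      · exact absurd (hpt _ (mem_restrictRel.mp hq)) q.2.2
      · exact hpt
  have hγ₀Γ : p₀.2 ∈ OmegaPlus m := ⟨p₀.1, by simpa using hp₀⟩
  have htΓY : restrictRel (OmegaMinus m) (diagRel (OmegaPlus m)) ∈ Y.S := by
    refine (hYmem _).mpr ⟨?_, diagRel (OmegaPlus m), hΓfib, rfl⟩
    exact ⟨(⟨p₀.2, fun hpt => hΔΓ _ hpt hγ₀Γ⟩, ⟨p₀.2, fun hpt => hΔΓ _ hpt hγ₀Γ⟩), ⟨rfl, hγ₀Γ⟩⟩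
  have htΓeq : restrictRel (OmegaMinus m) (diagRel (OmegaPlus m))
      = diagRel {x : ↥((OmegaMinus m)ᶜ) | (x : Ω) ∈ OmegaPlus m} := by
    ext ⟨x1, x2⟩
    constructor
    · rintro ⟨h1, h2⟩; exact ⟨Subtype.val_injective h1, h2⟩
    · rintro ⟨h1, h2⟩; exact ⟨congrArg Subtype.val h1, h2⟩
  have hΓbfib : diagRel {x : ↥((OmegaMinus m)ᶜ) | (x : Ω) ∈ OmegaPlus m} ∈ Y.S :=
    htΓeq ▸ htΓY
  have he''S := iso_mapsTo ψ hΓbfib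
  have he''diag := iso_diag ψ hΓbfib (diagRel_subset_univ _)
  have hψΓ : ψ.toFun (diagRel {x : ↥((OmegaMinus m)ᶜ) | (x : Ω) ∈ OmegaPlus m})
      = diagRel {a : Ω'' | (a, a) ∈
          ψ.toFun (diagRel {x : ↥((OmegaMinus m)ᶜ) | (x : Ω) ∈ OmegaPlus m})} :=
    diag_class_shape he''diag
  have hΓ''fib : diagRel {a : Ω'' | (a, a) ∈
      ψ.toFun (diagRel {x : ↥((OmegaMinus m)ᶜ) | (x : Ω) ∈ OmegaPlus m})} ∈ Y''.S :=
    hψΓ ▸ he''S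
  set Γb : Set ↥((OmegaMinus m)ᶜ) := {x : ↥((OmegaMinus m)ᶜ) | (x : Ω) ∈ OmegaPlus m}
    with hΓbdef
  set G2 : Set Ω'' := {a : Ω'' | (a, a) ∈ ψ.toFun (diagRel Γb)} with hG2def
  -- the point bijection between Ω and the duplicated point set
  have Hh : ∀ α : Ω, ∃ x : ↥((OmegaMinus m)ᶜ) ⊕ ↥Γb,
      (∀ hα : α ∉ OmegaMinus m, x = Sum.inl ⟨α, hα⟩) ∧
      (α ∈ OmegaMinus m → ∃ b, ∃ hbΔ : b ∉ OmegaMinus m,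
        ∃ hbΓ : (⟨b, hbΔ⟩ : ↥((OmegaMinus m)ᶜ)) ∈ Γb,
        (α, b) ∈ m ∧ x = Sum.inr ⟨⟨b, hbΔ⟩, hbΓ⟩) := by
    intro α
    by_cases hα : α ∈ OmegaMinus m
    · obtain ⟨b, hb⟩ := hα
      have hbΓ' : b ∈ OmegaPlus m := ⟨α, hb⟩
      have hbΔ : b ∉ OmegaMinus m := fun hh => hΔΓ _ hh hbΓ'
      exact ⟨Sum.inr ⟨⟨b, hbΔ⟩, hbΓ'⟩, fun hh => absurd ⟨b, hb⟩ hh,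
        fun _ => ⟨b, hbΔ, hbΓ', hb, rfl⟩⟩
    · exact ⟨Sum.inl ⟨α, hα⟩, fun _ => rfl, fun hh => absurd hh hα⟩
  choose hpt hh1 hh2 using Hh
  have hpart : ∀ (δ : Ω) (c' : ↥Γb),
      (δ, ((c' : ↥((OmegaMinus m)ᶜ)) : Ω)) ∈ m → hpt δ = Sum.inr c' := by
    intro δ c' hδc
    obtain ⟨b, hbΔ, hbΓ, hmb, heq⟩ := hh2 δ ⟨_, hδc⟩
    have eb : b = ((c' : ↥((OmegaMinus m)ᶜ)) : Ω) := hfun _ _ _ hmb hδc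
    rw [heq]
    congr 1
    exact Subtype.ext (Subtype.ext eb)
  have hhinj : Function.Injective hpt := by
    intro α₁ α₂ hEq
    by_cases h₁ : α₁ ∈ OmegaMinus m <;> by_cases h₂ : α₂ ∈ OmegaMinus m
    · obtain ⟨b₁, hb₁Δ, hb₁Γ, hm₁, he₁⟩ := hh2 α₁ h₁
      obtain ⟨b₂, hb₂Δ, hb₂Γ, hm₂, he₂⟩ := hh2 α₂ h₂
      rw [he₁, he₂] at hEq
      have e0 := Sum.inr_injective hEq
      have : b₁ = b₂ := congrArg Subtype.val (congrArg Subtype.val e0)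
      rw [this] at hm₁
      exact hinj _ _ _ hm₁ hm₂
    · obtain ⟨b₁, hb₁Δ, hb₁Γ, hm₁, he₁⟩ := hh2 α₁ h₁
      rw [he₁, hh1 α₂ h₂] at hEq
      exact absurd hEq (by simp)
    · obtain ⟨b₂, hb₂Δ, hb₂Γ, hm₂, he₂⟩ := hh2 α₂ h₂
      rw [he₂, hh1 α₁ h₁] at hEq
      exact absurd hEq (by simp)
    · rw [hh1 α₁ h₁, hh1 α₂ h₂] at hEq
      exact congrArg Subtype.val (Sum.inl_injective hEq)
  have hhsurj : Function.Surjective hpt := by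
    rintro (n | c)
    · exact ⟨↑n, hh1 ↑n n.2⟩
    · obtain ⟨δ, hδ⟩ := c.2
      exact ⟨δ, hpart δ c hδ⟩
  -- image computations
  have himA : ∀ s ∈ X.S, (∀ p ∈ s, p.1 ∉ OmegaMinus m) → (∀ p ∈ s, p.2 ∉ OmegaMinus m) →
      Prod.map hpt hpt '' s = dupLift Γb false false (restrictRel (OmegaMinus m) s) := by
    intro s hsS h1 h2
    ext ⟨x, y⟩
    constructor
    · rintro ⟨⟨a, b⟩, hab, heq⟩
      rw [← heq]
      show (hpt a, hpt b) ∈ _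
      rw [hh1 a (h1 _ hab), hh1 b (h2 _ hab)]
      exact ⟨rfl, rfl, hab⟩
    · rintro ⟨e1, e2, e3⟩
      cases x with
      | inr c => exact absurd e1 (by simp)
      | inl x₀ =>
        cases y with
        | inr c => exact absurd e2 (by simp)
        | inl y₀ =>
          refine ⟨((x₀ : Ω), (y₀ : Ω)), e3, ?_⟩
          show (hpt ↑x₀, hpt ↑y₀) = _
          rw [hh1 ↑x₀ x₀.2, hh1 ↑y₀ y₀.2]
  have himB : ∀ s ∈ X.S, (∀ p ∈ s, p.1 ∈ OmegaMinus m) → (∀ p ∈ s, p.2 ∉ OmegaMinus m) →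
      Prod.map hpt hpt '' s
        = dupLift Γb true false (restrictRel (OmegaMinus m) (relComp (swapRel m) s)) := by
    intro s hsS h1 h2
    ext ⟨x, y⟩
    constructor
    · rintro ⟨⟨δ, b⟩, hab, heq⟩
      obtain ⟨c, hcΔ, hcΓ, hmc, heqδ⟩ := hh2 δ (h1 _ hab)
      rw [← heq]
      show (hpt δ, hpt b) ∈ _
      rw [heqδ, hh1 b (h2 _ hab)]
      exact ⟨rfl, rfl, δ, hmc, hab⟩
    · rintro ⟨e1, e2, e3⟩
      cases x with
      | inl x₀ => exact absurd e1 (by simp)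
      | inr c' =>
        cases y with
        | inr c => exact absurd e2 (by simp)
        | inl y₀ =>
          obtain ⟨δ, hδ1, hδ2⟩ := e3
          refine ⟨(δ, (y₀ : Ω)), hδ2, ?_⟩
          show (hpt δ, hpt ↑y₀) = _
          rw [hpart δ c' hδ1, hh1 ↑y₀ y₀.2]
  have himC : ∀ s ∈ X.S, (∀ p ∈ s, p.1 ∉ OmegaMinus m) → (∀ p ∈ s, p.2 ∈ OmegaMinus m) →
      Prod.map hpt hpt '' s
        = dupLift Γb false true (restrictRel (OmegaMinus m) (relComp s m)) := by
    intro s hsS h1 h2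
    ext ⟨x, y⟩
    constructor
    · rintro ⟨⟨a, δ⟩, hab, heq⟩
      obtain ⟨c, hcΔ, hcΓ, hmc, heqδ⟩ := hh2 δ (h2 _ hab)
      rw [← heq]
      show (hpt a, hpt δ) ∈ _
      rw [hh1 a (h1 _ hab), heqδ]
      exact ⟨rfl, rfl, δ, hab, hmc⟩
    · rintro ⟨e1, e2, e3⟩
      cases x with
      | inr c => exact absurd e1 (by simp)
      | inl x₀ =>
        cases y with
        | inl y₀ => exact absurd e2 (by simp)
        | inr c' =>
          obtain ⟨δ, hδ1, hδ2⟩ := e3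
          refine ⟨((x₀ : Ω), δ), hδ1, ?_⟩
          show (hpt ↑x₀, hpt δ) = _
          rw [hh1 ↑x₀ x₀.2, hpart δ c' hδ2]
  have himD : ∀ s ∈ X.S, (∀ p ∈ s, p.1 ∈ OmegaMinus m) → (∀ p ∈ s, p.2 ∈ OmegaMinus m) →
      Prod.map hpt hpt '' s
        = dupLift Γb true true
            (restrictRel (OmegaMinus m) (relComp (swapRel m) (relComp s m))) := by
    intro s hsS h1 h2
    ext ⟨x, y⟩
    constructor
    · rintro ⟨⟨δ₁, δ₂⟩, hab, heq⟩
      obtain ⟨c₁, hc₁Δ, hc₁Γ, hmc₁, heq₁⟩ := hh2 δ₁ (h1 _ hab)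
      obtain ⟨c₂, hc₂Δ, hc₂Γ, hmc₂, heq₂⟩ := hh2 δ₂ (h2 _ hab)
      rw [← heq]
      show (hpt δ₁, hpt δ₂) ∈ _
      rw [heq₁, heq₂]
      exact ⟨rfl, rfl, δ₁, hmc₁, δ₂, hab, hmc₂⟩
    · rintro ⟨e1, e2, e3⟩
      cases x with
      | inl x₀ => exact absurd e1 (by simp)
      | inr c₁' =>
        cases y with
        | inl y₀ => exact absurd e2 (by simp)
        | inr c₂' =>
          obtain ⟨δ₁, hδ1, δ₂, hs12, hm2⟩ := e3
          refine ⟨(δ₁, δ₂), hs12, ?_⟩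
          show (hpt δ₁, hpt δ₂) = _
          rw [hpart δ₁ c₁' hδ1, hpart δ₂ c₂' hm2]
  -- base relations lie in X.S and avoid the fiber
  have mkY : ∀ u ∈ X.S, (∀ p ∈ u, p.1 ∉ OmegaMinus m) → (∀ p ∈ u, p.2 ∉ OmegaMinus m) →
      restrictRel (OmegaMinus m) u ∈ Y.S := by
    intro u huS h1 h2
    refine (hYmem _).mpr ⟨?_, u, huS, rfl⟩
    obtain ⟨⟨a, b⟩, hab⟩ := class_nonempty X huS
    exact ⟨(⟨a, h1 _ hab⟩, ⟨b, h2 _ hab⟩), hab⟩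
  have hBs : ∀ s ∈ X.S, (∀ p ∈ s, p.1 ∈ OmegaMinus m) → relComp (swapRel m) s ∈ X.S := by
    intro s hsS h1
    exact relComp_thin_mem X (swapRel_mem X hmS) (fun a b c u v => hinj _ _ _ u v)
      (fun a b c u v => hfun _ _ _ u v) hsS h1
  have hCs : ∀ s ∈ X.S, (∀ p ∈ s, p.2 ∈ OmegaMinus m) → relComp s m ∈ X.S := by
    intro s hsS h2
    rw [relComp_swap_swap]
    exact swapRel_mem X (hBs (swapRel s) (swapRel_mem X hsS) (fun p hp => h2 (p.2, p.1) hp))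
  have hBavoid : ∀ s : Set (Ω × Ω), (∀ p ∈ s, p.2 ∉ OmegaMinus m) →
      (∀ p ∈ relComp (swapRel m) s, p.1 ∉ OmegaMinus m) ∧
      (∀ p ∈ relComp (swapRel m) s, p.2 ∉ OmegaMinus m) := by
    intro s h2
    constructor
    · rintro p ⟨c, hc1, hc2⟩ hin
      exact hΔΓ _ hin ⟨c, hc1⟩
    · rintro p ⟨c, hc1, hc2⟩
      exact h2 (c, p.2) hc2
  have hCavoid : ∀ s : Set (Ω × Ω), (∀ p ∈ s, p.1 ∉ OmegaMinus m) →
      (∀ p ∈ relComp s m, p.1 ∉ OmegaMinus m) ∧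
      (∀ p ∈ relComp s m, p.2 ∉ OmegaMinus m) := by
    intro s h1
    constructor
    · rintro p ⟨c, hc1, hc2⟩
      exact h1 (p.1, c) hc1
    · rintro p ⟨c, hc1, hc2⟩ hin
      exact hΔΓ _ hin ⟨c, hc2⟩
  -- the algebraic isomorphism X → dup Y
  have hmapinj : Function.Injective (Prod.map hpt hpt) := by
    intro p q hpq
    exact Prod.ext (hhinj (congrArg Prod.fst hpq)) (hhinj (congrArg Prod.snd hpq))
  have hXmaps : ∀ s ∈ X.S, ∃ σ τ, ∃ base ∈ Y.S, Prod.map hpt hpt '' s = dupLift Γb σ τ base := by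
    intro s hsS
    rcases fiber_dichotomy_src X hΔfib hsS with hsrc | hsrc <;>
      rcases fiber_dichotomy_tgt X hΔfib hsS with htgt | htgt
    · refine ⟨true, true, _, ?_, himD s hsS hsrc htgt⟩
      have hCmem : relComp s m ∈ X.S := hCs s hsS htgt
      have hsrcC : ∀ p ∈ relComp s m, p.1 ∈ OmegaMinus m := by
        rintro p ⟨c, hc1, hc2⟩
        exact hsrc (p.1, c) hc1
      have hBmem : relComp (swapRel m) (relComp s m) ∈ X.S := hBs _ hCmem hsrcC
      refine mkY _ hBmem ?_ ?_
      · rintro p ⟨c, hc1, hc2⟩ hin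
        exact hΔΓ _ hin ⟨c, hc1⟩
      · rintro p ⟨c, hc1, c₂, hc2, hc3⟩ hin
        exact hΔΓ _ hin ⟨c₂, hc3⟩
    · refine ⟨true, false, _, ?_, himB s hsS hsrc htgt⟩
      exact mkY _ (hBs s hsS hsrc) (hBavoid s htgt).1 (hBavoid s htgt).2
    · refine ⟨false, true, _, ?_, himC s hsS hsrc htgt⟩
      exact mkY _ (hCs s hsS htgt) (hCavoid s hsrc).1 (hCavoid s hsrc).2
    · refine ⟨false, false, _, ?_, himA s hsS hsrc htgt⟩
      exact mkY s hsS hsrc htgt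
  have hXbij : Set.BijOn (fun s => Prod.map hpt hpt '' s) X.S
      (dupCC Y Γb hΓbfib).S := by
    refine ⟨?_, ?_, ?_⟩
    · intro s hsS
      obtain ⟨σ, τ, base, hbaseY, heq⟩ := hXmaps s hsS
      obtain ⟨q, hq⟩ := class_nonempty X hsS
      exact ⟨⟨Prod.map hpt hpt q, Set.mem_image_of_mem _ hq⟩, σ, τ, base, hbaseY, heq⟩
    · intro s₁ hs₁ s₂ hs₂ heq
      exact Set.image_injective.mpr hmapinj heq
    · rintro u ⟨hune, σ, τ, t, htY, rfl⟩
      obtain ⟨htne, s₀, hs₀S, rfl⟩ := (hYmem t).mp htY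
      obtain ⟨hav1, hav2⟩ := havoid s₀ hs₀S htne
      cases σ with
      | false =>
        cases τ with
        | false =>
          exact ⟨s₀, hs₀S, himA s₀ hs₀S hav1 hav2⟩
        | true =>
          have htgtΓ : ∀ p ∈ s₀, p.2 ∈ OmegaPlus m := by
            intro p hp
            exact dup_tgt_all hΓbfib htY hune (⟨p.1, hav1 p hp⟩, ⟨p.2, hav2 p hp⟩) hp
          have hswS : relComp m (swapRel s₀) ∈ X.S :=
            relComp_thin_mem X hmS hfun hinj (swapRel_mem X hs₀S)
              (fun p hp => htgtΓ (p.2, p.1) hp)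
          have hsS : relComp s₀ (swapRel m) ∈ X.S := by
            rw [relComp_swap_swap]
            exact swapRel_mem X hswS
          have hsrc' : ∀ p ∈ relComp s₀ (swapRel m), p.1 ∉ OmegaMinus m := by
            rintro p ⟨c, hc1, hc2⟩
            exact hav1 (p.1, c) hc1
          have htgt' : ∀ p ∈ relComp s₀ (swapRel m), p.2 ∈ OmegaMinus m := by
            rintro p ⟨c, hc1, hc2⟩
            exact ⟨c, hc2⟩
          refine ⟨relComp s₀ (swapRel m), hsS, ?_⟩
          show Prod.map hpt hpt '' _ = _
          rw [himC _ hsS hsrc' htgt', relComp_right_cancel hfun htgtΓ]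
      | true =>
        have hsrcΓ : ∀ p ∈ s₀, p.1 ∈ OmegaPlus m := by
          intro p hp
          exact dup_src_all hΓbfib htY hune (⟨p.1, hav1 p hp⟩, ⟨p.2, hav2 p hp⟩) hp
        cases τ with
        | false =>
          have hsS : relComp m s₀ ∈ X.S :=
            relComp_thin_mem X hmS hfun hinj hs₀S hsrcΓ
          have hsrc' : ∀ p ∈ relComp m s₀, p.1 ∈ OmegaMinus m := by
            rintro p ⟨c, hc1, hc2⟩
            exact ⟨c, hc1⟩
          have htgt' : ∀ p ∈ relComp m s₀, p.2 ∉ OmegaMinus m := by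
            rintro p ⟨c, hc1, hc2⟩
            exact hav2 (c, p.2) hc2
          refine ⟨relComp m s₀, hsS, ?_⟩
          show Prod.map hpt hpt '' _ = _
          rw [himB _ hsS hsrc' htgt', swap_relComp_cancel hfun hsrcΓ]
        | true =>
          have htgtΓ : ∀ p ∈ s₀, p.2 ∈ OmegaPlus m := by
            intro p hp
            exact dup_tgt_all hΓbfib htY hune (⟨p.1, hav1 p hp⟩, ⟨p.2, hav2 p hp⟩) hp
          have hswS : relComp m (swapRel s₀) ∈ X.S :=
            relComp_thin_mem X hmS hfun hinj (swapRel_mem X hs₀S)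
              (fun p hp => htgtΓ (p.2, p.1) hp)
          have hu₁S : relComp s₀ (swapRel m) ∈ X.S := by
            rw [relComp_swap_swap]
            exact swapRel_mem X hswS
          have hsS : relComp m (relComp s₀ (swapRel m)) ∈ X.S := by
            refine relComp_thin_mem X hmS hfun hinj hu₁S ?_
            rintro p ⟨c, hc1, hc2⟩
            exact hsrcΓ (p.1, c) hc1
          have hsrc' : ∀ p ∈ relComp m (relComp s₀ (swapRel m)), p.1 ∈ OmegaMinus m := by
            rintro p ⟨c, hc1, hc2⟩
            exact ⟨c, hc1⟩
          have htgt' : ∀ p ∈ relComp m (relComp s₀ (swapRel m)), p.2 ∈ OmegaMinus m := by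
            rintro p ⟨c, hc1, c₂, hcc1, hcc2⟩
            exact ⟨c₂, hcc2⟩
          refine ⟨relComp m (relComp s₀ (swapRel m)), hsS, ?_⟩
          show Prod.map hpt hpt '' _ = _
          rw [himD _ hsS hsrc' htgt', relComp_assoc,
            relComp_right_cancel hfun htgtΓ, swap_relComp_cancel hfun hsrcΓ]
  have hXcard : ∀ r ∈ X.S, ∀ s ∈ X.S, ∀ t ∈ X.S, ∀ p ∈ t,
      ∀ p' ∈ (fun s => Prod.map hpt hpt '' s) t,
      interNum r s p = interNum ((fun s => Prod.map hpt hpt '' s) r)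
        ((fun s => Prod.map hpt hpt '' s) s) p' := by
    intro r hr s hs t ht p hp p' hp'
    obtain ⟨⟨a, b⟩, hab, rfl⟩ := hp'
    rw [show Prod.map hpt hpt (a, b) = (hpt a, hpt b) from rfl]
    rw [interNum_image_bij hhinj]
    exact X.coherent r hr s hs t ht p hp (a, b) hab
  haveI := hfin''
  obtain ⟨f, hfbij, hf⟩ := hsepX (Ω'' ⊕ ↥G2) inferInstance (dupCC Y'' G2 hΓ''fib)
    (algIsoComp ⟨fun s => Prod.map hpt hpt '' s, hXbij, hXcard⟩
      (dupAlgIso ψ hΓbfib hΓ''fib hψΓ))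
  replace hf : ∀ s ∈ X.S,
      dupIsoFun ψ Γb G2 (Prod.map hpt hpt '' s) = Prod.map f f '' s := hf
  have hΦA : ∀ s ∈ X.S, (∀ p ∈ s, p.1 ∉ OmegaMinus m) → (∀ p ∈ s, p.2 ∉ OmegaMinus m) →
      dupIsoFun ψ Γb G2 (Prod.map hpt hpt '' s)
        = dupLift G2 false false (ψ.toFun (restrictRel (OmegaMinus m) s)) := by
    intro s hsS h1 h2
    rw [himA s hsS h1 h2]
    refine dupIsoFun_val ψ G2 (mkY s hsS h1 h2) ?_
    rw [← himA s hsS h1 h2]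
    obtain ⟨q, hq⟩ := class_nonempty X hsS
    exact ⟨_, Set.mem_image_of_mem _ hq⟩
  have hΦD : dupIsoFun ψ Γb G2 (Prod.map hpt hpt '' diagRel (OmegaMinus m))
      = dupLift G2 true true (ψ.toFun (restrictRel (OmegaMinus m)
          (relComp (swapRel m) (relComp (diagRel (OmegaMinus m)) m)))) := by
    have h1 : ∀ p ∈ diagRel (OmegaMinus m), p.1 ∈ OmegaMinus m := fun p hp => hp.2
    have h2 : ∀ p ∈ diagRel (OmegaMinus m), p.2 ∈ OmegaMinus m := fun p hp =>
      hp.1 ▸ hp.2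
    rw [himD _ hΔfib h1 h2]
    refine dupIsoFun_val ψ G2 ?_ ?_
    · have hCmem : relComp (diagRel (OmegaMinus m)) m ∈ X.S := hCs _ hΔfib h2
      have hsrcC : ∀ p ∈ relComp (diagRel (OmegaMinus m)) m, p.1 ∈ OmegaMinus m := by
        rintro p ⟨c, hc1, hc2⟩
        exact h1 (p.1, c) hc1
      refine mkY _ (hBs _ hCmem hsrcC) ?_ ?_
      · rintro p ⟨c, hc1, hc2⟩ hin
        exact hΔΓ _ hin ⟨c, hc1⟩
      · rintro p ⟨c, hc1, c₂, hc2, hc3⟩ hin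
        exact hΔΓ _ hin ⟨c₂, hc3⟩
    · rw [← himD _ hΔfib h1 h2]
      obtain ⟨q, hq⟩ := class_nonempty X hΔfib
      exact ⟨_, Set.mem_image_of_mem _ hq⟩
  have hside0 : ∀ α, α ∉ OmegaMinus m → (f α).isRight = false := by
    intro α hα
    have hsS := classOf_mem X (α, α)
    have hαs := mem_classOf X (α, α)
    have hfib : ∀ p ∈ classOf X (α, α), p.1 ∈ fiberOf X α :=
      fun p hp => source_mem_fiber X hsS hαs hp
    have h1 : ∀ p ∈ classOf X (α, α), p.1 ∉ OmegaMinus m := by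
      intro p hp hin
      have e1 : fiberOf X p.1 = OmegaMinus m := fiberOf_eq_of_diag X hΔfib hin
      have e2 : fiberOf X p.1 = fiberOf X α := fiberOf_eq_of_mem X (hfib p hp)
      apply hα
      rw [← e1, e2]
      exact mem_fiberOf_self X α
    have h2 : ∀ p ∈ classOf X (α, α), p.2 ∉ OmegaMinus m := by
      intro p hp
      rw [← (classOf_diag_subset X α hp).1]
      exact h1 p hp
    have hval := (hΦA _ hsS h1 h2).symm.trans (hf _ hsS)
    have hmem : (f α, f α) ∈ Prod.map f f '' classOf X (α, α) := ⟨(α, α), hαs, rfl⟩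
    rw [← hval] at hmem
    exact hmem.1
  have hside1 : ∀ α, α ∈ OmegaMinus m → (f α).isRight = true := by
    intro α hα
    have hval := hΦD.symm.trans (hf _ hΔfib)
    have hmem : (f α, f α) ∈ Prod.map f f '' diagRel (OmegaMinus m) :=
      ⟨(α, α), ⟨rfl, hα⟩, rfl⟩
    rw [← hval] at hmem
    exact hmem.1
  refine ⟨fun x => dupQ G2 (f ↑x), ⟨?_, ?_⟩, ?_⟩
  · intro x₁ x₂ hEq
    have := dup_eq_of ((hside0 ↑x₁ x₁.2).trans (hside0 ↑x₂ x₂.2).symm) hEq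
    exact Subtype.ext (hfbij.1 this)
  · intro y
    obtain ⟨α, hfα⟩ := hfbij.2 (Sum.inl y)
    have hα : α ∉ OmegaMinus m := by
      intro hin
      have hcon := hside1 α hin
      rw [hfα] at hcon
      simp at hcon
    refine ⟨⟨α, hα⟩, ?_⟩
    show dupQ G2 (f α) = y
    rw [hfα]
    rfl
  · intro t htY
    obtain ⟨htne, s, hsS, rfl⟩ := (hYmem t).mp htY
    obtain ⟨h1, h2⟩ := havoid s hsS htne
    have hval := (hΦA s hsS h1 h2).symm.trans (hf s hsS)
    ext ⟨y₁, y₂⟩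
    constructor
    · intro hy
      have hmem : (Sum.inl y₁, Sum.inl y₂) ∈
          dupLift G2 false false (ψ.toFun (restrictRel (OmegaMinus m) s)) :=
        ⟨rfl, rfl, hy⟩
      rw [hval] at hmem
      obtain ⟨⟨a, b⟩, hab, heq⟩ := hmem
      have e1 : f a = Sum.inl y₁ := congrArg Prod.fst heq
      have e2 : f b = Sum.inl y₂ := congrArg Prod.snd heq
      refine ⟨(⟨a, h1 _ hab⟩, ⟨b, h2 _ hab⟩), hab, ?_⟩
      show (dupQ G2 (f a), dupQ G2 (f b)) = (y₁, y₂)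
      rw [e1, e2]
      rfl
    · rintro ⟨⟨x₁, x₂⟩, hx, heq⟩
      have hmem : ((↑x₁ : Ω), (↑x₂ : Ω)) ∈ s := hx
      have hlift : (f ↑x₁, f ↑x₂) ∈ dupLift G2 false false
          (ψ.toFun (restrictRel (OmegaMinus m) s)) := by
        rw [hval]
        exact ⟨((↑x₁ : Ω), (↑x₂ : Ω)), hmem, rfl⟩
      rw [← heq]
      show (dupQ G2 (f ↑x₁), dupQ G2 (f ↑x₂)) ∈ ψ.toFun (restrictRel (OmegaMinus m) s)
      exact hlift.2.2

end DirB

end CCAux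
/-- in the situation of removing a pendant or twin matching,
`WL(G)_π ∖ Δ` is separable iff `WL(G)_π` is separable. -/
theorem stmt_13 {Ω : Type u} [Fintype Ω] (G : SimpleGraph Ω)
    (π : Set (Set Ω)) (X : CoherentConfiguration Ω)
    (hWL : IsWLPart G π X) (hcorrect : π = {Δ | X.IsFiber Δ})
    (m : Set (Ω × Ω)) (hm : IsPendantMatching G X m ∨ IsTwinMatching G X m)
    (Δ : Set Ω) (hΔ : Δ = OmegaMinus m)
    (Y : CoherentConfiguration ↥(Δᶜ))
    (hY : Y.S = {t | t.Nonempty ∧ ∃ s ∈ X.S, t = restrictRel Δ s}) :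
    CCSeparable Y ↔ CCSeparable X := by
  have hmm : IsMatchingCC X m ∧ OmegaMinus m ≠ OmegaPlus m := by
    rcases hm with hmp | hmp
    · exact ⟨hmp.1, hmp.2.1⟩
    · exact ⟨hmp.1, hmp.2.1⟩
  obtain ⟨⟨hmS, hirr, hfun, hinj⟩, hne⟩ := hmm
  subst hΔ
  constructor
  · exact fun hsep => CCAux.dirA X hmS hfun hinj hne Y hY hsep
  · exact fun hsep => CCAux.dirB X hmS hfun hinj hne Y hY hsep
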